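/- arXiv:1705.09333 — 2 statements merged into one kernel-verified Lean document; each statement's English description precedes it below -/
import Mathlib

section
/- For all τ, z in the stated domain, the following identity holds: −y ∏_{n≥1} (1−q^n)² (1+y⁻²q^{n−1}) (1+y²q^n) (1+iy⁻³q^{n−1}) (1−iy³q^n) / [ (1+iy⁻¹q^{n−1}) (1−iyq^n) (1−iy⁻¹q^{n−1})² (1+iyq^n)² ] − y ∏_{n≥1} (1−q^n)² (1+y⁻²q^{n−1}) (1+y²q^n) (1−iy⁻³q^{n−1}) (1+iy³q^n) / [ (1−iy⁻¹q^{n−1}) (1+iyq^n) (1+iy⁻¹q^{n−1})² (1−iyq^n)² ] = −i ( η(2τ)² θ₂(τ,2z) / ( η(τ) θ₂(2τ,2z)² ) ) · [ θ₁(τ,z+1/4) θ₁(τ,3z+1/4) − θ₁(τ,z−1/4) θ₁(τ,3z−1/4) ]. (This is the identity establishing that the graded trace attached to the classes 4A and 4B of the umbral group G⁽⁵⁾ equals the umbral meromorphic Jacobi form ψ⁽⁵⁾_{4AB}.) -/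
open Complex

noncomputable def W (a r : ℂ) (n : ℕ) : ℂ := 1 + a * r ^ n

lemma tprod_eq_zero_of_eq_zero {f : ℕ → ℂ} (k : ℕ) (h : f k = 0) : ∏' n, f n = 0 := by
  have hp : HasProd f 0 := by
    rw [HasProd]
    have hev : ∀ᶠ s in Filter.atTop, ∏ i ∈ s, f i = 0 := by
      filter_upwards [Filter.eventually_ge_atTop ({k} : Finset ℕ)] with s hs
      exact Finset.prod_eq_zero (hs (Finset.mem_singleton_self k)) h
    exact Filter.Tendsto.congr' (by filter_upwards [hev] with s hs; exact hs.symm)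
      tendsto_const_nhds
  exact hp.tprod_eq

lemma log_summableW {a r : ℂ} (hr : ‖r‖ < 1) :
    Summable (fun n : ℕ => Complex.log (W a r n)) := by
  simp only [W]
  have hg : Summable (fun n : ℕ => 3/2 * (‖a‖ * ‖r‖ ^ n)) :=
    (((summable_geometric_of_lt_one (norm_nonneg r) hr).mul_left ‖a‖).mul_left (3/2))
  apply Summable.of_norm_bounded_eventually_nat hg
  have h0 : Filter.Tendsto (fun n : ℕ => ‖a * r ^ n‖) Filter.atTop (nhds 0) := by
    have := (tendsto_pow_atTop_nhds_zero_of_norm_lt_one hr).const_mul a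
    simpa using this.norm
  have hev : ∀ᶠ n : ℕ in Filter.atTop, ‖a * r ^ n‖ ≤ 1/2 := by
    have := h0.eventually_le_const (show (0:ℝ) < 1/2 by norm_num)
    filter_upwards [this] with n hn using hn
  filter_upwards [hev] with n hn
  calc ‖Complex.log (1 + a * r ^ n)‖ ≤ 3/2 * ‖a * r ^ n‖ :=
        Complex.norm_log_one_add_half_le_self hn
  _ = 3/2 * (‖a‖ * ‖r‖ ^ n) := by rw [norm_mul, norm_pow]

lemma keyW {a r : ℂ} (hr : ‖r‖ < 1) (h0 : ∀ n : ℕ, W a r n ≠ 0) :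
    (Multipliable (W a r)) ∧
    (Multipliable fun n : ℕ => (W a r n)⁻¹) ∧
    (∏' n : ℕ, W a r n) ≠ 0 ∧
    (∏' n : ℕ, (W a r n)⁻¹) = (∏' n : ℕ, W a r n)⁻¹ := by
  have hs := log_summableW (a := a) (r := r) hr
  have hfun : (cexp ∘ fun n : ℕ => Complex.log (W a r n)) = W a r :=
    funext fun n => Complex.exp_log (h0 n)
  have h1 := hs.hasSum.cexp
  rw [hfun] at h1
  have hfun2 : (cexp ∘ fun n : ℕ => -Complex.log (W a r n)) =
      fun n : ℕ => (W a r n)⁻¹ := by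
    funext n
    simp only [Function.comp_apply, Complex.exp_neg, Complex.exp_log (h0 n)]
  have h2 := hs.neg.hasSum.cexp
  rw [hfun2] at h2
  refine ⟨⟨_, h1⟩, ⟨_, h2⟩, ?_, ?_⟩
  · rw [h1.tprod_eq]; exact Complex.exp_ne_zero _
  · rw [h1.tprod_eq, h2.tprod_eq, tsum_neg, Complex.exp_neg]

lemma one_add_neW {a r : ℂ} (ha : ‖a‖ < 1) (hr : ‖r‖ ≤ 1) (n : ℕ) : W a r n ≠ 0 := by
  intro h
  have hx : ‖a * r ^ n‖ < 1 := by
    calc ‖a * r ^ n‖ = ‖a‖ * ‖r‖ ^ n := by rw [norm_mul, norm_pow]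
    _ ≤ ‖a‖ * 1 := by
        apply mul_le_mul_of_nonneg_left (pow_le_one₀ (norm_nonneg r) hr) (norm_nonneg a)
    _ < 1 := by simpa using ha
  have : a * r ^ n = -1 := by
    have h' : 1 + a * r ^ n = 0 := h
    linear_combination h'
  rw [this] at hx; simp at hx

lemma key_id (N d e d' e' : ℂ) (hd : d ≠ 0) (he : e ≠ 0) (hd' : d' ≠ 0) (he' : e' ≠ 0) :
    N / (d * e * d' ^ 2 * e' ^ 2) =
      N * d * e * ((d * d')⁻¹) ^ 2 * ((e * e')⁻¹) ^ 2 := by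
  field_simp

set_option maxHeartbeats 2000000 in
lemma core (q y ε : ℂ) (hnq : ‖q‖ < 1) (hny : ‖y⁻¹‖ < 1) (hnyq : ‖y * q‖ < 1)
    (hε : ε * ε = -1) (hεn : ‖ε‖ = 1)
    (hA : ∀ n : ℕ, W (y ^ 2 * q) q n ≠ 0) (hB : ∀ n : ℕ, W (-(ε * y ^ 3 * q)) q n ≠ 0) :
    (∏' n : ℕ,
      ((1 - q ^ (n + 1)) ^ 2 * (1 + y⁻¹ ^ 2 * q ^ n) * (1 + y ^ 2 * q ^ (n + 1)) *
          (1 + ε * y⁻¹ ^ 3 * q ^ n) * (1 - ε * y ^ 3 * q ^ (n + 1)) /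
        ((1 + ε * y⁻¹ * q ^ n) * (1 - ε * y * q ^ (n + 1)) *
          (1 - ε * y⁻¹ * q ^ n) ^ 2 * (1 + ε * y * q ^ (n + 1)) ^ 2)))
    = (∏' n : ℕ, W (-q) q n) ^ 2 * (∏' n : ℕ, W (y⁻¹ ^ 2) q n) *
      (∏' n : ℕ, W (y ^ 2 * q) q n) * (∏' n : ℕ, W (ε * y⁻¹) q n) *
      (∏' n : ℕ, W (-(ε * y * q)) q n) * (∏' n : ℕ, W (ε * y⁻¹ ^ 3) q n) *
      (∏' n : ℕ, W (-(ε * y ^ 3 * q)) q n) *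
      ((∏' n : ℕ, W (y⁻¹ ^ 2) (q ^ 2) n)⁻¹) ^ 2 *
      ((∏' n : ℕ, W (y ^ 2 * q ^ 2) (q ^ 2) n)⁻¹) ^ 2 := by
  have hq0 : (0:ℝ) ≤ ‖q‖ := norm_nonneg q
  have hnq2 : ‖q ^ 2‖ < 1 := by
    rw [norm_pow]; exact pow_lt_one₀ hq0 hnq two_ne_zero
  have hny2 : ‖y⁻¹ ^ 2‖ < 1 := by
    rw [norm_pow]; exact pow_lt_one₀ (norm_nonneg _) hny two_ne_zero
  have hny3 : ‖y⁻¹ ^ 3‖ < 1 := by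
    rw [norm_pow]; exact pow_lt_one₀ (norm_nonneg _) hny three_ne_zero
  have hnyq2 : ‖y ^ 2 * q ^ 2‖ < 1 := by
    rw [show y ^ 2 * q ^ 2 = (y * q) ^ 2 by ring, norm_pow]
    exact pow_lt_one₀ (norm_nonneg _) hnyq two_ne_zero
  have hnegq : ‖-q‖ < 1 := by rwa [norm_neg]
  have hnegq2 : ‖-(q ^ 2)‖ < 1 := by rwa [norm_neg]
  have hεy : ‖ε * y⁻¹‖ < 1 := by rwa [norm_mul, hεn, one_mul]
  have hεy3 : ‖ε * y⁻¹ ^ 3‖ < 1 := by rwa [norm_mul, hεn, one_mul]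
  have hεyq : ‖-(ε * y * q)‖ < 1 := by
    rwa [norm_neg, show ε * y * q = ε * (y * q) by ring, norm_mul, hεn, one_mul]
  have hεyq' : ‖ε * y * q‖ < 1 := by
    rwa [show ε * y * q = ε * (y * q) by ring, norm_mul, hεn, one_mul]
  -- keyW instances
  have kp := keyW hnq (one_add_neW hnegq hnq.le)
  have kp2 := keyW hnq2 (one_add_neW hnegq2 hnq2.le)
  have kc1 := keyW hnq (one_add_neW hny2 hnq.le)
  have kc2 := keyW hnq hA
  have kc1' := keyW hnq2 (one_add_neW hny2 hnq2.le)
  have kc2' := keyW hnq2 (one_add_neW hnyq2 hnq2.le)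
  have kd := keyW hnq (one_add_neW hεy hnq.le)
  have kd' := keyW hnq (one_add_neW (a := -(ε * y⁻¹)) (by rwa [norm_neg]) hnq.le)
  have ke := keyW hnq (one_add_neW hεyq hnq.le)
  have ke' := keyW hnq (one_add_neW hεyq' hnq.le)
  have kf := keyW hnq (one_add_neW hεy3 hnq.le)
  have kg := keyW hnq hB
  -- nonzero facts in plain form
  have hz1 : ∀ n : ℕ, (1 : ℂ) + ε * y⁻¹ * q ^ n ≠ 0 := fun n =>
    one_add_neW hεy hnq.le n
  have hz2 : ∀ n : ℕ, (1 : ℂ) - ε * y⁻¹ * q ^ n ≠ 0 := fun n h =>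
    one_add_neW (a := -(ε * y⁻¹)) (by rwa [norm_neg]) hnq.le n
      (show W _ _ n = 0 by simp only [W]; linear_combination h)
  have hz3 : ∀ n : ℕ, (1 : ℂ) - ε * y * q ^ (n + 1) ≠ 0 := fun n h =>
    one_add_neW hεyq hnq.le n
      (show W _ _ n = 0 by simp only [W]; linear_combination h)
  have hz4 : ∀ n : ℕ, (1 : ℂ) + ε * y * q ^ (n + 1) ≠ 0 := fun n h =>
    one_add_neW hεyq' hnq.le n
      (show W _ _ n = 0 by simp only [W]; linear_combination h)
  -- the factorization identities
  have hdd : ∀ n : ℕ, W (y⁻¹ ^ 2) (q ^ 2) n =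
      (1 + ε * y⁻¹ * q ^ n) * (1 - ε * y⁻¹ * q ^ n) := by
    intro n; simp only [W]
    linear_combination (y⁻¹ ^ 2 * q ^ n * q ^ n) * hε
  have hee : ∀ n : ℕ, W (y ^ 2 * q ^ 2) (q ^ 2) n =
      (1 - ε * y * q ^ (n + 1)) * (1 + ε * y * q ^ (n + 1)) := by
    intro n; simp only [W]
    linear_combination (y ^ 2 * q ^ (n + 1) * q ^ (n + 1)) * hε
  -- termwise equality
  have hstep1 : (∏' n : ℕ,
      ((1 - q ^ (n + 1)) ^ 2 * (1 + y⁻¹ ^ 2 * q ^ n) * (1 + y ^ 2 * q ^ (n + 1)) *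
          (1 + ε * y⁻¹ ^ 3 * q ^ n) * (1 - ε * y ^ 3 * q ^ (n + 1)) /
        ((1 + ε * y⁻¹ * q ^ n) * (1 - ε * y * q ^ (n + 1)) *
          (1 - ε * y⁻¹ * q ^ n) ^ 2 * (1 + ε * y * q ^ (n + 1)) ^ 2)))
      = ∏' n : ℕ, (W (-q) q n * (W (-q) q n * (W (y⁻¹ ^ 2) q n * (W (y ^ 2 * q) q n *
          (W (ε * y⁻¹) q n * (W (-(ε * y * q)) q n * (W (ε * y⁻¹ ^ 3) q n *
          (W (-(ε * y ^ 3 * q)) q n * ((W (y⁻¹ ^ 2) (q ^ 2) n)⁻¹ *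
          ((W (y⁻¹ ^ 2) (q ^ 2) n)⁻¹ * ((W (y ^ 2 * q ^ 2) (q ^ 2) n)⁻¹ *
          (W (y ^ 2 * q ^ 2) (q ^ 2) n)⁻¹))))))))))) := by
    apply tprod_congr
    intro n
    rw [key_id _ _ _ _ _ (hz1 n) (hz3 n) (hz2 n) (hz4 n), ← hdd n, ← hee n]
    simp only [W]
    ring
  have hstep2 := ((kp.1.hasProd.mul (kp.1.hasProd.mul (kc1.1.hasProd.mul
      (kc2.1.hasProd.mul (kd.1.hasProd.mul (ke.1.hasProd.mul (kf.1.hasProd.mul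
      (kg.1.hasProd.mul (kc1'.2.1.hasProd.mul (kc1'.2.1.hasProd.mul
      (kc2'.2.1.hasProd.mul kc2'.2.1.hasProd)))))))))))).tprod_eq
  rw [hstep1, hstep2, kc1'.2.2.2, kc2'.2.2.2]
  ring


/-- Dedekind eta function via its infinite product:
    `η(τ) = e^{πiτ/12} ∏_{n≥1} (1 − e^{2πinτ})`. -/
noncomputable def Eta (τ : ℂ) : ℂ :=
  Complex.exp (Real.pi * Complex.I * τ / 12) *
    ∏' n : ℕ, (1 - Complex.exp (2 * Real.pi * Complex.I * ((n : ℂ) + 1) * τ))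

/-- Jacobi theta function `θ₁` via its triple product expansion. -/
noncomputable def Theta1 (τ w : ℂ) : ℂ :=
  -Complex.I * Complex.exp (Real.pi * Complex.I * τ / 4) *
    Complex.exp (Real.pi * Complex.I * w) *
    ∏' n : ℕ,
      ((1 - Complex.exp (-(2 * Real.pi * Complex.I * w)) *
            Complex.exp (2 * Real.pi * Complex.I * (n : ℂ) * τ)) *
       (1 - Complex.exp (2 * Real.pi * Complex.I * w) *
            Complex.exp (2 * Real.pi * Complex.I * ((n : ℂ) + 1) * τ)) *
       (1 - Complex.exp (2 * Real.pi * Complex.I * ((n : ℂ) + 1) * τ)))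

/-- Jacobi theta function `θ₂` via its triple product expansion. -/
noncomputable def Theta2 (τ w : ℂ) : ℂ :=
  Complex.exp (Real.pi * Complex.I * τ / 4) *
    Complex.exp (Real.pi * Complex.I * w) *
    ∏' n : ℕ,
      ((1 + Complex.exp (-(2 * Real.pi * Complex.I * w)) *
            Complex.exp (2 * Real.pi * Complex.I * (n : ℂ) * τ)) *
       (1 + Complex.exp (2 * Real.pi * Complex.I * w) *
            Complex.exp (2 * Real.pi * Complex.I * ((n : ℂ) + 1) * τ)) *
       (1 - Complex.exp (2 * Real.pi * Complex.I * ((n : ℂ) + 1) * τ)))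

set_option maxHeartbeats 1000000 in
/-- Umbral moonshine identity for the classes 4A, 4B of G⁽⁵⁾: the graded trace equals ψ⁽⁵⁾_{4AB}. -/
theorem stmt_18 (τ z : ℂ) (h1 : 0 < -z.im) (h2 : -z.im < τ.im)
    (q y : ℂ)
    (hq : q = Complex.exp (2 * Real.pi * Complex.I * τ))
    (hy : y = Complex.exp (2 * Real.pi * Complex.I * z)) :
    -y * (∏' n : ℕ,
      ((1 - q ^ (n + 1)) ^ 2 * (1 + y⁻¹ ^ 2 * q ^ n) * (1 + y ^ 2 * q ^ (n + 1)) *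
          (1 + Complex.I * y⁻¹ ^ 3 * q ^ n) * (1 - Complex.I * y ^ 3 * q ^ (n + 1)) /
        ((1 + Complex.I * y⁻¹ * q ^ n) * (1 - Complex.I * y * q ^ (n + 1)) *
          (1 - Complex.I * y⁻¹ * q ^ n) ^ 2 * (1 + Complex.I * y * q ^ (n + 1)) ^ 2)))
    - y * (∏' n : ℕ,
      ((1 - q ^ (n + 1)) ^ 2 * (1 + y⁻¹ ^ 2 * q ^ n) * (1 + y ^ 2 * q ^ (n + 1)) *
          (1 - Complex.I * y⁻¹ ^ 3 * q ^ n) * (1 + Complex.I * y ^ 3 * q ^ (n + 1)) /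
        ((1 - Complex.I * y⁻¹ * q ^ n) * (1 + Complex.I * y * q ^ (n + 1)) *
          (1 + Complex.I * y⁻¹ * q ^ n) ^ 2 * (1 - Complex.I * y * q ^ (n + 1)) ^ 2)))
    = -Complex.I * (Eta (2 * τ) ^ 2 * Theta2 τ (2 * z) /
        (Eta τ * (Theta2 (2 * τ) (2 * z)) ^ 2)) *
        (Theta1 τ (z + 1 / 4) * Theta1 τ (3 * z + 1 / 4) -
          Theta1 τ (z - 1 / 4) * Theta1 τ (3 * z - 1 / 4)) := by
  have hτim : 0 < τ.im := h1.trans h2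
  have hzim : z.im < 0 := by linarith
  have hπ := Real.pi_pos
  have hnorm : ∀ w : ℂ, ‖Complex.exp w‖ = Real.exp w.re := fun w => by
    rw [Complex.norm_exp]
  -- basic norm facts
  have hnq : ‖q‖ < 1 := by
    rw [hq, hnorm, Real.exp_lt_one_iff]
    have : (2 * (Real.pi : ℂ) * Complex.I * τ).re = -(2 * Real.pi * τ.im) := by
      simp [Complex.mul_re, Complex.mul_im]
    rw [this]; nlinarith
  have hny : ‖y⁻¹‖ < 1 := by
    have h' : y⁻¹ = Complex.exp (-(2 * (Real.pi : ℂ) * Complex.I * z)) := by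
      rw [hy, ← Complex.exp_neg]
    rw [h', hnorm, Real.exp_lt_one_iff]
    have : (-(2 * (Real.pi : ℂ) * Complex.I * z)).re = 2 * Real.pi * z.im := by
      simp [Complex.mul_re, Complex.mul_im]
    rw [this]; nlinarith
  have hnyq : ‖y * q‖ < 1 := by
    have h' : y * q = Complex.exp (2 * (Real.pi : ℂ) * Complex.I * z
        + 2 * (Real.pi : ℂ) * Complex.I * τ) := by
      rw [hy, hq, Complex.exp_add]
    rw [h', hnorm, Real.exp_lt_one_iff]
    have : (2 * (Real.pi : ℂ) * Complex.I * z + 2 * (Real.pi : ℂ) * Complex.I * τ).re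
        = -(2 * Real.pi * (z.im + τ.im)) := by
      simp [Complex.mul_re, Complex.mul_im]; ring
    rw [this]; nlinarith
  -- derived norms
  have hnq2 : ‖q ^ 2‖ < 1 := by
    rw [norm_pow]; exact pow_lt_one₀ (norm_nonneg q) hnq two_ne_zero
  have hny2 : ‖y⁻¹ ^ 2‖ < 1 := by
    rw [norm_pow]; exact pow_lt_one₀ (norm_nonneg _) hny two_ne_zero
  have hny3 : ‖y⁻¹ ^ 3‖ < 1 := by
    rw [norm_pow]; exact pow_lt_one₀ (norm_nonneg _) hny three_ne_zero
  have hnyq2 : ‖y ^ 2 * q ^ 2‖ < 1 := by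
    rw [show y ^ 2 * q ^ 2 = (y * q) ^ 2 by ring, norm_pow]
    exact pow_lt_one₀ (norm_nonneg _) hnyq two_ne_zero
  have hnegq : ‖-q‖ < 1 := by rwa [norm_neg]
  have hnegq2 : ‖-(q ^ 2)‖ < 1 := by rwa [norm_neg]
  have hIy : ‖Complex.I * y⁻¹‖ < 1 := by
    rwa [norm_mul, Complex.norm_I, one_mul]
  have hIy3 : ‖Complex.I * y⁻¹ ^ 3‖ < 1 := by
    rwa [norm_mul, Complex.norm_I, one_mul]
  have hIyq : ‖-(Complex.I * y * q)‖ < 1 := by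
    rwa [norm_neg, show Complex.I * y * q = Complex.I * (y * q) by ring, norm_mul,
      Complex.norm_I, one_mul]
  have hIyq' : ‖Complex.I * y * q‖ < 1 := by
    rwa [show Complex.I * y * q = Complex.I * (y * q) by ring, norm_mul,
      Complex.norm_I, one_mul]
  have hmIy : ‖-Complex.I * y⁻¹‖ < 1 := by
    rwa [show -Complex.I * y⁻¹ = -(Complex.I * y⁻¹) by ring, norm_neg, norm_mul,
      Complex.norm_I, one_mul]
  have hmIy3 : ‖-Complex.I * y⁻¹ ^ 3‖ < 1 := by
    rwa [show -Complex.I * y⁻¹ ^ 3 = -(Complex.I * y⁻¹ ^ 3) by ring, norm_neg, norm_mul,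
      Complex.norm_I, one_mul]
  have hmIyq : ‖-(-Complex.I * y * q)‖ < 1 := by
    rwa [norm_neg, show -Complex.I * y * q = -(Complex.I * (y * q)) by ring, norm_neg,
      norm_mul, Complex.norm_I, one_mul]
  have hmIyq' : ‖-Complex.I * y * q‖ < 1 := by
    rwa [show -Complex.I * y * q = -(Complex.I * (y * q)) by ring, norm_neg, norm_mul,
      Complex.norm_I, one_mul]
  -- multipliability instances
  have kp := keyW hnq (one_add_neW hnegq hnq.le)
  have kp2 := keyW hnq2 (one_add_neW hnegq2 hnq2.le)
  have kc1 := keyW hnq (one_add_neW hny2 hnq.le)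
  have kc1' := keyW hnq2 (one_add_neW hny2 hnq2.le)
  have kc2' := keyW hnq2 (one_add_neW hnyq2 hnq2.le)
  have kd := keyW hnq (one_add_neW hIy hnq.le)
  have ke := keyW hnq (one_add_neW hIyq hnq.le)
  have kf := keyW hnq (one_add_neW hIy3 hnq.le)
  have kd' := keyW hnq (one_add_neW hmIy hnq.le)
  have ke' := keyW hnq (one_add_neW hmIyq hnq.le)
  have kf' := keyW hnq (one_add_neW hmIy3 hnq.le)
  -- nonzero scalars
  have hy0 : y ≠ 0 := by rw [hy]; exact Complex.exp_ne_zero _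
  have hc0 : Complex.exp ((Real.pi : ℂ) * Complex.I * τ / 12) ≠ 0 := Complex.exp_ne_zero _
  -- exponential reductions
  have hq0 : ∀ n : ℕ, Complex.exp (2 * (Real.pi : ℂ) * Complex.I * (n : ℂ) * τ) = q ^ n := by
    intro n; rw [hq, ← Complex.exp_nat_mul]; congr 1; push_cast; ring
  have hq1 : ∀ n : ℕ,
      Complex.exp (2 * (Real.pi : ℂ) * Complex.I * ((n : ℂ) + 1) * τ) = q ^ (n + 1) := by
    intro n; rw [hq, ← Complex.exp_nat_mul]; congr 1; push_cast; ring
  have hq20 : ∀ n : ℕ,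
      Complex.exp (2 * (Real.pi : ℂ) * Complex.I * (n : ℂ) * (2 * τ)) = (q ^ 2) ^ n := by
    intro n; rw [hq, ← pow_mul, ← Complex.exp_nat_mul]; congr 1; push_cast; ring
  have hq21 : ∀ n : ℕ,
      Complex.exp (2 * (Real.pi : ℂ) * Complex.I * ((n : ℂ) + 1) * (2 * τ))
        = (q ^ 2) ^ (n + 1) := by
    intro n; rw [hq, ← pow_mul, ← Complex.exp_nat_mul]; congr 1; push_cast; ring
  have hyy : Complex.exp ((Real.pi : ℂ) * Complex.I * (2 * z)) = y := by
    rw [hy]; congr 1; ring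
  have hy2e : Complex.exp (2 * (Real.pi : ℂ) * Complex.I * (2 * z)) = y ^ 2 := by
    rw [hy, ← Complex.exp_nat_mul]; congr 1; push_cast; ring
  have hy2e' : Complex.exp (-(2 * (Real.pi : ℂ) * Complex.I * (2 * z))) = y⁻¹ ^ 2 := by
    rw [Complex.exp_neg, hy2e, inv_pow]
  have hI2 : Complex.exp ((Real.pi : ℂ) * Complex.I / 2) = Complex.I := by
    rw [show ((Real.pi : ℂ) * Complex.I / 2) = ((Real.pi / 2 : ℝ) : ℂ) * Complex.I by
        push_cast; ring,
      Complex.exp_mul_I, ← Complex.ofReal_cos, ← Complex.ofReal_sin,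
      Real.cos_pi_div_two, Real.sin_pi_div_two]
    simp
  have hI2' : Complex.exp (-((Real.pi : ℂ) * Complex.I / 2)) = -Complex.I := by
    rw [Complex.exp_neg, hI2, Complex.inv_I]
  have ea1 : Complex.exp (2 * (Real.pi : ℂ) * Complex.I * (z + 1 / 4)) = Complex.I * y := by
    rw [show (2 * (Real.pi : ℂ) * Complex.I * (z + 1 / 4))
        = (Real.pi : ℂ) * Complex.I / 2 + 2 * (Real.pi : ℂ) * Complex.I * z by ring,
      Complex.exp_add, hI2, ← hy]
  have ea1' : Complex.exp (-(2 * (Real.pi : ℂ) * Complex.I * (z + 1 / 4)))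
      = -(Complex.I * y⁻¹) := by
    rw [Complex.exp_neg, ea1, mul_inv, Complex.inv_I]; ring
  have eb1 : Complex.exp (2 * (Real.pi : ℂ) * Complex.I * (3 * z + 1 / 4))
      = Complex.I * y ^ 3 := by
    rw [show (2 * (Real.pi : ℂ) * Complex.I * (3 * z + 1 / 4))
        = (Real.pi : ℂ) * Complex.I / 2 + (2 * (Real.pi : ℂ) * Complex.I * z
          + (2 * (Real.pi : ℂ) * Complex.I * z + 2 * (Real.pi : ℂ) * Complex.I * z)) by ring,
      Complex.exp_add, Complex.exp_add, Complex.exp_add, hI2, ← hy]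
    ring
  have eb1' : Complex.exp (-(2 * (Real.pi : ℂ) * Complex.I * (3 * z + 1 / 4)))
      = -(Complex.I * y⁻¹ ^ 3) := by
    rw [Complex.exp_neg, eb1, mul_inv, Complex.inv_I, inv_pow]; ring
  have ec1 : Complex.exp (2 * (Real.pi : ℂ) * Complex.I * (z - 1 / 4))
      = -Complex.I * y := by
    rw [show (2 * (Real.pi : ℂ) * Complex.I * (z - 1 / 4))
        = -((Real.pi : ℂ) * Complex.I / 2) + 2 * (Real.pi : ℂ) * Complex.I * z by ring,
      Complex.exp_add, hI2', ← hy]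
  have ec1' : Complex.exp (-(2 * (Real.pi : ℂ) * Complex.I * (z - 1 / 4)))
      = Complex.I * y⁻¹ := by
    rw [Complex.exp_neg, ec1, show -Complex.I * y = -(Complex.I * y) by ring, inv_neg,
      mul_inv, Complex.inv_I]
    ring
  have ed1 : Complex.exp (2 * (Real.pi : ℂ) * Complex.I * (3 * z - 1 / 4))
      = -Complex.I * y ^ 3 := by
    rw [show (2 * (Real.pi : ℂ) * Complex.I * (3 * z - 1 / 4))
        = -((Real.pi : ℂ) * Complex.I / 2) + (2 * (Real.pi : ℂ) * Complex.I * z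
          + (2 * (Real.pi : ℂ) * Complex.I * z + 2 * (Real.pi : ℂ) * Complex.I * z)) by ring,
      Complex.exp_add, Complex.exp_add, Complex.exp_add, hI2', ← hy]
    ring
  have ed1' : Complex.exp (-(2 * (Real.pi : ℂ) * Complex.I * (3 * z - 1 / 4)))
      = Complex.I * y⁻¹ ^ 3 := by
    rw [Complex.exp_neg, ed1, show -Complex.I * y ^ 3 = -(Complex.I * y ^ 3) by ring,
      inv_neg, mul_inv, Complex.inv_I, inv_pow]
    ring
  have hc2e : Complex.exp ((Real.pi : ℂ) * Complex.I * (2 * τ) / 12)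
      = Complex.exp ((Real.pi : ℂ) * Complex.I * τ / 12) ^ 2 := by
    rw [← Complex.exp_nat_mul]; congr 1; push_cast; ring
  have hc3e : Complex.exp ((Real.pi : ℂ) * Complex.I * τ / 4)
      = Complex.exp ((Real.pi : ℂ) * Complex.I * τ / 12) ^ 3 := by
    rw [← Complex.exp_nat_mul]; congr 1; push_cast; ring
  have hc6e : Complex.exp ((Real.pi : ℂ) * Complex.I * (2 * τ) / 4)
      = Complex.exp ((Real.pi : ℂ) * Complex.I * τ / 12) ^ 6 := by
    rw [← Complex.exp_nat_mul]; congr 1; push_cast; ring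
  have hEAB : Complex.exp ((Real.pi : ℂ) * Complex.I * (z + 1 / 4)) *
      Complex.exp ((Real.pi : ℂ) * Complex.I * (3 * z + 1 / 4)) = y ^ 2 * Complex.I := by
    rw [← Complex.exp_add, show ((Real.pi : ℂ) * Complex.I * (z + 1 / 4)
        + (Real.pi : ℂ) * Complex.I * (3 * z + 1 / 4))
        = 2 * (Real.pi : ℂ) * Complex.I * z + (2 * (Real.pi : ℂ) * Complex.I * z
          + (Real.pi : ℂ) * Complex.I / 2) by ring,
      Complex.exp_add, Complex.exp_add, hI2, ← hy]
    ring
  have hECD : Complex.exp ((Real.pi : ℂ) * Complex.I * (z - 1 / 4)) *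
      Complex.exp ((Real.pi : ℂ) * Complex.I * (3 * z - 1 / 4)) = -(y ^ 2 * Complex.I) := by
    rw [← Complex.exp_add, show ((Real.pi : ℂ) * Complex.I * (z - 1 / 4)
        + (Real.pi : ℂ) * Complex.I * (3 * z - 1 / 4))
        = 2 * (Real.pi : ℂ) * Complex.I * z + (2 * (Real.pi : ℂ) * Complex.I * z
          + -((Real.pi : ℂ) * Complex.I / 2)) by ring,
      Complex.exp_add, Complex.exp_add, hI2', ← hy]
    ring
  -- Eta reductions
  have hEta1 : Eta τ = Complex.exp ((Real.pi : ℂ) * Complex.I * τ / 12) *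
      ∏' n : ℕ, W (-q) q n := by
    unfold Eta
    congr 1
    apply tprod_congr; intro n
    rw [hq1 n]; simp only [W]; ring
  have hEta2 : Eta (2 * τ) = Complex.exp ((Real.pi : ℂ) * Complex.I * τ / 12) ^ 2 *
      ∏' n : ℕ, W (-(q ^ 2)) (q ^ 2) n := by
    unfold Eta
    rw [hc2e]
    congr 1
    apply tprod_congr; intro n
    rw [hq21 n]; simp only [W]; ring
  -- Theta2 reductions (raw)
  have hTh2a' : Theta2 τ (2 * z) = Complex.exp ((Real.pi : ℂ) * Complex.I * τ / 12) ^ 3 * y *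
      ∏' n : ℕ, (W (y⁻¹ ^ 2) q n * (W (y ^ 2 * q) q n * W (-q) q n)) := by
    unfold Theta2
    rw [hc3e, hyy]
    congr 1
    apply tprod_congr; intro n
    rw [hy2e', hq0 n, hy2e, hq1 n]; simp only [W]; ring
  have hTh2b : Theta2 (2 * τ) (2 * z) = Complex.exp ((Real.pi : ℂ) * Complex.I * τ / 12) ^ 6 * y *
      ((∏' n : ℕ, W (y⁻¹ ^ 2) (q ^ 2) n) * ((∏' n : ℕ, W (y ^ 2 * q ^ 2) (q ^ 2) n) *
        (∏' n : ℕ, W (-(q ^ 2)) (q ^ 2) n))) := by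
    unfold Theta2
    rw [hc6e, hyy]
    congr 1
    rw [← (kc1'.1.hasProd.mul (kc2'.1.hasProd.mul kp2.1.hasProd)).tprod_eq]
    apply tprod_congr; intro n
    rw [hy2e', hq20 n, hy2e, hq21 n]; simp only [W]; ring
  -- Theta1 reductions
  have hTh1a : Theta1 τ (z + 1 / 4) = -Complex.I *
      Complex.exp ((Real.pi : ℂ) * Complex.I * τ / 12) ^ 3 *
      Complex.exp ((Real.pi : ℂ) * Complex.I * (z + 1 / 4)) *
      ((∏' n : ℕ, W (Complex.I * y⁻¹) q n) * ((∏' n : ℕ, W (-(Complex.I * y * q)) q n) *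
        (∏' n : ℕ, W (-q) q n))) := by
    unfold Theta1
    rw [hc3e]
    congr 1
    rw [← (kd.1.hasProd.mul (ke.1.hasProd.mul kp.1.hasProd)).tprod_eq]
    apply tprod_congr; intro n
    rw [ea1', hq0 n, ea1, hq1 n]; simp only [W]; ring
  have hTh1c : Theta1 τ (z - 1 / 4) = -Complex.I *
      Complex.exp ((Real.pi : ℂ) * Complex.I * τ / 12) ^ 3 *
      Complex.exp ((Real.pi : ℂ) * Complex.I * (z - 1 / 4)) *
      ((∏' n : ℕ, W (-Complex.I * y⁻¹) q n) * ((∏' n : ℕ, W (-(-Complex.I * y * q)) q n) *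
        (∏' n : ℕ, W (-q) q n))) := by
    unfold Theta1
    rw [hc3e]
    congr 1
    rw [← (kd'.1.hasProd.mul (ke'.1.hasProd.mul kp.1.hasProd)).tprod_eq]
    apply tprod_congr; intro n
    rw [ec1', hq0 n, ec1, hq1 n]; simp only [W]; ring
  -- the "+" half
  have hplus : -y * (∏' n : ℕ,
      ((1 - q ^ (n + 1)) ^ 2 * (1 + y⁻¹ ^ 2 * q ^ n) * (1 + y ^ 2 * q ^ (n + 1)) *
          (1 + Complex.I * y⁻¹ ^ 3 * q ^ n) * (1 - Complex.I * y ^ 3 * q ^ (n + 1)) /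
        ((1 + Complex.I * y⁻¹ * q ^ n) * (1 - Complex.I * y * q ^ (n + 1)) *
          (1 - Complex.I * y⁻¹ * q ^ n) ^ 2 * (1 + Complex.I * y * q ^ (n + 1)) ^ 2)))
      = -Complex.I * (Eta (2 * τ) ^ 2 * Theta2 τ (2 * z) /
        (Eta τ * (Theta2 (2 * τ) (2 * z)) ^ 2)) *
        (Theta1 τ (z + 1 / 4) * Theta1 τ (3 * z + 1 / 4)) := by
    by_cases hA : ∀ n : ℕ, W (y ^ 2 * q) q n ≠ 0
    · by_cases hB : ∀ n : ℕ, W (-(Complex.I * y ^ 3 * q)) q n ≠ 0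
      · -- main branch
        have kc2 := keyW hnq hA
        have kg := keyW hnq hB
        have hTh2a : Theta2 τ (2 * z) = Complex.exp ((Real.pi : ℂ) * Complex.I * τ / 12) ^ 3 * y *
            ((∏' n : ℕ, W (y⁻¹ ^ 2) q n) * ((∏' n : ℕ, W (y ^ 2 * q) q n) *
              (∏' n : ℕ, W (-q) q n))) := by
          rw [hTh2a']
          congr 1
          exact (kc1.1.hasProd.mul (kc2.1.hasProd.mul kp.1.hasProd)).tprod_eq
        have hTh1b : Theta1 τ (3 * z + 1 / 4) = -Complex.I *
            Complex.exp ((Real.pi : ℂ) * Complex.I * τ / 12) ^ 3 *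
            Complex.exp ((Real.pi : ℂ) * Complex.I * (3 * z + 1 / 4)) *
            ((∏' n : ℕ, W (Complex.I * y⁻¹ ^ 3) q n) *
              ((∏' n : ℕ, W (-(Complex.I * y ^ 3 * q)) q n) * (∏' n : ℕ, W (-q) q n))) := by
          unfold Theta1
          rw [hc3e]
          congr 1
          rw [← (kf.1.hasProd.mul (kg.1.hasProd.mul kp.1.hasProd)).tprod_eq]
          apply tprod_congr; intro n
          rw [eb1', hq0 n, eb1, hq1 n]; simp only [W]; ring
        have hcoreI := core q y Complex.I hnq hny hnyq Complex.I_mul_I Complex.norm_I hA hB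
        rw [hcoreI, hEta1, hEta2, hTh2a, hTh2b, hTh1a, hTh1b]
        have hTT : (-Complex.I * Complex.exp ((Real.pi : ℂ) * Complex.I * τ / 12) ^ 3 *
            Complex.exp ((Real.pi : ℂ) * Complex.I * (z + 1 / 4)) *
            ((∏' n : ℕ, W (Complex.I * y⁻¹) q n) * ((∏' n : ℕ, W (-(Complex.I * y * q)) q n) *
              (∏' n : ℕ, W (-q) q n)))) *
            (-Complex.I * Complex.exp ((Real.pi : ℂ) * Complex.I * τ / 12) ^ 3 *
            Complex.exp ((Real.pi : ℂ) * Complex.I * (3 * z + 1 / 4)) *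
            ((∏' n : ℕ, W (Complex.I * y⁻¹ ^ 3) q n) *
              ((∏' n : ℕ, W (-(Complex.I * y ^ 3 * q)) q n) * (∏' n : ℕ, W (-q) q n))))
            = -(Complex.exp ((Real.pi : ℂ) * Complex.I * τ / 12) ^ 6 * y ^ 2 * Complex.I *
              (((∏' n : ℕ, W (Complex.I * y⁻¹) q n) * ((∏' n : ℕ, W (-(Complex.I * y * q)) q n) *
                (∏' n : ℕ, W (-q) q n))) *
               ((∏' n : ℕ, W (Complex.I * y⁻¹ ^ 3) q n) *
                ((∏' n : ℕ, W (-(Complex.I * y ^ 3 * q)) q n) * (∏' n : ℕ, W (-q) q n))))) := by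
          linear_combination (Complex.I * Complex.I *
              Complex.exp ((Real.pi : ℂ) * Complex.I * τ / 12) ^ 6 *
              (((∏' n : ℕ, W (Complex.I * y⁻¹) q n) * ((∏' n : ℕ, W (-(Complex.I * y * q)) q n) *
                (∏' n : ℕ, W (-q) q n))) *
               ((∏' n : ℕ, W (Complex.I * y⁻¹ ^ 3) q n) *
                ((∏' n : ℕ, W (-(Complex.I * y ^ 3 * q)) q n) * (∏' n : ℕ, W (-q) q n))))) * hEAB
            + (Complex.I * Complex.exp ((Real.pi : ℂ) * Complex.I * τ / 12) ^ 6 * y ^ 2 *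
              (((∏' n : ℕ, W (Complex.I * y⁻¹) q n) * ((∏' n : ℕ, W (-(Complex.I * y * q)) q n) *
                (∏' n : ℕ, W (-q) q n))) *
               ((∏' n : ℕ, W (Complex.I * y⁻¹ ^ 3) q n) *
                ((∏' n : ℕ, W (-(Complex.I * y ^ 3 * q)) q n) * (∏' n : ℕ, W (-q) q n))))) *
              Complex.I_mul_I
        rw [hTT]
        have hfin : ∀ X U : ℂ, -Complex.I * X *
            (-(Complex.exp ((Real.pi : ℂ) * Complex.I * τ / 12) ^ 6 * y ^ 2 * Complex.I * U))
            = -(Complex.exp ((Real.pi : ℂ) * Complex.I * τ / 12) ^ 6 * y ^ 2 * X * U) := by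
          intro X U
          linear_combination (Complex.exp ((Real.pi : ℂ) * Complex.I * τ / 12) ^ 6 * y ^ 2 *
            X * U) * Complex.I_mul_I
        rw [hfin]
        have hP1 := kp.2.2.1
        have hP2 := kp2.2.2.1
        have hP9 := kc1'.2.2.1
        have hP10 := kc2'.2.2.1
        set C := Complex.exp ((Real.pi : ℂ) * Complex.I * τ / 12) with hCdef
        set P1 := ∏' n : ℕ, W (-q) q n with hP1def
        set P2 := ∏' n : ℕ, W (-(q ^ 2)) (q ^ 2) n with hP2def
        set P3 := ∏' n : ℕ, W (y⁻¹ ^ 2) q n with hP3def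
        set P4 := ∏' n : ℕ, W (y ^ 2 * q) q n with hP4def
        set P5 := ∏' n : ℕ, W (Complex.I * y⁻¹) q n with hP5def
        set P6 := ∏' n : ℕ, W (-(Complex.I * y * q)) q n with hP6def
        set P7 := ∏' n : ℕ, W (Complex.I * y⁻¹ ^ 3) q n with hP7def
        set P8 := ∏' n : ℕ, W (-(Complex.I * y ^ 3 * q)) q n with hP8def
        set P9 := ∏' n : ℕ, W (y⁻¹ ^ 2) (q ^ 2) n with hP9def
        set P10 := ∏' n : ℕ, W (y ^ 2 * q ^ 2) (q ^ 2) n with hP10def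
        clear_value C P1 P2 P3 P4 P5 P6 P7 P8 P9 P10
        have hstep : -y * (P1 ^ 2 * P3 * P4 * P5 * P6 * P7 * P8 * P9⁻¹ ^ 2 * P10⁻¹ ^ 2)
            = -y * (P1 ^ 2 * P3 * P4 * P5 * P6 * P7 * P8 * P9⁻¹ ^ 2 * P10⁻¹ ^ 2) *
              ((y * y⁻¹) ^ 2 * (P1 * P1⁻¹) * (C * C⁻¹) ^ 13 * (P2 * P2⁻¹) ^ 2) := by
          rw [mul_inv_cancel₀ hy0, mul_inv_cancel₀ hP1, mul_inv_cancel₀ hc0,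
            mul_inv_cancel₀ hP2]
          ring
        rw [hstep]
        ring
      · -- some 1 - I y^3 q^(m+1) vanishes
        push_neg at hB
        obtain ⟨m, hm⟩ := hB
        simp only [W] at hm
        have hm' : (1 : ℂ) - Complex.I * y ^ 3 * q ^ (m + 1) = 0 := by linear_combination hm
        have hL : (∏' n : ℕ,
            ((1 - q ^ (n + 1)) ^ 2 * (1 + y⁻¹ ^ 2 * q ^ n) * (1 + y ^ 2 * q ^ (n + 1)) *
                (1 + Complex.I * y⁻¹ ^ 3 * q ^ n) * (1 - Complex.I * y ^ 3 * q ^ (n + 1)) /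
              ((1 + Complex.I * y⁻¹ * q ^ n) * (1 - Complex.I * y * q ^ (n + 1)) *
                (1 - Complex.I * y⁻¹ * q ^ n) ^ 2 * (1 + Complex.I * y * q ^ (n + 1)) ^ 2)))
            = 0 := by
          apply tprod_eq_zero_of_eq_zero m
          rw [hm']; simp
        have hT : Theta1 τ (3 * z + 1 / 4) = 0 := by
          unfold Theta1
          have h0 : (∏' n : ℕ,
              ((1 - Complex.exp (-(2 * (Real.pi : ℂ) * Complex.I * (3 * z + 1 / 4))) *
                  Complex.exp (2 * (Real.pi : ℂ) * Complex.I * (n : ℂ) * τ)) *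
               (1 - Complex.exp (2 * (Real.pi : ℂ) * Complex.I * (3 * z + 1 / 4)) *
                  Complex.exp (2 * (Real.pi : ℂ) * Complex.I * ((n : ℂ) + 1) * τ)) *
               (1 - Complex.exp (2 * (Real.pi : ℂ) * Complex.I * ((n : ℂ) + 1) * τ)))) = 0 := by
            apply tprod_eq_zero_of_eq_zero m
            rw [eb1, hq1 m, hm']; simp
          rw [h0, mul_zero]
        rw [hL, hT]; ring
    · -- some 1 + y^2 q^(m+1) vanishes
      push_neg at hA
      obtain ⟨m, hm⟩ := hA
      simp only [W] at hm
      have hm' : (1 : ℂ) + y ^ 2 * q ^ (m + 1) = 0 := by linear_combination hm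
      have hL : (∏' n : ℕ,
          ((1 - q ^ (n + 1)) ^ 2 * (1 + y⁻¹ ^ 2 * q ^ n) * (1 + y ^ 2 * q ^ (n + 1)) *
              (1 + Complex.I * y⁻¹ ^ 3 * q ^ n) * (1 - Complex.I * y ^ 3 * q ^ (n + 1)) /
            ((1 + Complex.I * y⁻¹ * q ^ n) * (1 - Complex.I * y * q ^ (n + 1)) *
              (1 - Complex.I * y⁻¹ * q ^ n) ^ 2 * (1 + Complex.I * y * q ^ (n + 1)) ^ 2)))
          = 0 := by
        apply tprod_eq_zero_of_eq_zero m
        rw [hm']; simp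
      have hT : Theta2 τ (2 * z) = 0 := by
        unfold Theta2
        have h0 : (∏' n : ℕ,
            ((1 + Complex.exp (-(2 * (Real.pi : ℂ) * Complex.I * (2 * z))) *
                Complex.exp (2 * (Real.pi : ℂ) * Complex.I * (n : ℂ) * τ)) *
             (1 + Complex.exp (2 * (Real.pi : ℂ) * Complex.I * (2 * z)) *
                Complex.exp (2 * (Real.pi : ℂ) * Complex.I * ((n : ℂ) + 1) * τ)) *
             (1 - Complex.exp (2 * (Real.pi : ℂ) * Complex.I * ((n : ℂ) + 1) * τ)))) = 0 := by
          apply tprod_eq_zero_of_eq_zero m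
          rw [hy2e, hq1 m, hm']; simp
        rw [h0, mul_zero]
      rw [hL, hT]; ring
  -- the "-" half
  have hminus : -y * (∏' n : ℕ,
      ((1 - q ^ (n + 1)) ^ 2 * (1 + y⁻¹ ^ 2 * q ^ n) * (1 + y ^ 2 * q ^ (n + 1)) *
          (1 - Complex.I * y⁻¹ ^ 3 * q ^ n) * (1 + Complex.I * y ^ 3 * q ^ (n + 1)) /
        ((1 - Complex.I * y⁻¹ * q ^ n) * (1 + Complex.I * y * q ^ (n + 1)) *
          (1 + Complex.I * y⁻¹ * q ^ n) ^ 2 * (1 - Complex.I * y * q ^ (n + 1)) ^ 2)))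
      = Complex.I * (Eta (2 * τ) ^ 2 * Theta2 τ (2 * z) /
        (Eta τ * (Theta2 (2 * τ) (2 * z)) ^ 2)) *
        (Theta1 τ (z - 1 / 4) * Theta1 τ (3 * z - 1 / 4)) := by
    have hbridge : (∏' n : ℕ,
        ((1 - q ^ (n + 1)) ^ 2 * (1 + y⁻¹ ^ 2 * q ^ n) * (1 + y ^ 2 * q ^ (n + 1)) *
            (1 - Complex.I * y⁻¹ ^ 3 * q ^ n) * (1 + Complex.I * y ^ 3 * q ^ (n + 1)) /
          ((1 - Complex.I * y⁻¹ * q ^ n) * (1 + Complex.I * y * q ^ (n + 1)) *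
            (1 + Complex.I * y⁻¹ * q ^ n) ^ 2 * (1 - Complex.I * y * q ^ (n + 1)) ^ 2)))
        = (∏' n : ℕ,
        ((1 - q ^ (n + 1)) ^ 2 * (1 + y⁻¹ ^ 2 * q ^ n) * (1 + y ^ 2 * q ^ (n + 1)) *
            (1 + -Complex.I * y⁻¹ ^ 3 * q ^ n) * (1 - -Complex.I * y ^ 3 * q ^ (n + 1)) /
          ((1 + -Complex.I * y⁻¹ * q ^ n) * (1 - -Complex.I * y * q ^ (n + 1)) *
            (1 - -Complex.I * y⁻¹ * q ^ n) ^ 2 * (1 + -Complex.I * y * q ^ (n + 1)) ^ 2))) := by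
      apply tprod_congr; intro n
      congr 1
      · ring
      · ring
    rw [hbridge]
    by_cases hA : ∀ n : ℕ, W (y ^ 2 * q) q n ≠ 0
    · by_cases hB : ∀ n : ℕ, W (-(-Complex.I * y ^ 3 * q)) q n ≠ 0
      · -- main branch
        have kc2 := keyW hnq hA
        have kg' := keyW hnq hB
        have hTh2a : Theta2 τ (2 * z) = Complex.exp ((Real.pi : ℂ) * Complex.I * τ / 12) ^ 3 * y *
            ((∏' n : ℕ, W (y⁻¹ ^ 2) q n) * ((∏' n : ℕ, W (y ^ 2 * q) q n) *
              (∏' n : ℕ, W (-q) q n))) := by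
          rw [hTh2a']
          congr 1
          exact (kc1.1.hasProd.mul (kc2.1.hasProd.mul kp.1.hasProd)).tprod_eq
        have hTh1d : Theta1 τ (3 * z - 1 / 4) = -Complex.I *
            Complex.exp ((Real.pi : ℂ) * Complex.I * τ / 12) ^ 3 *
            Complex.exp ((Real.pi : ℂ) * Complex.I * (3 * z - 1 / 4)) *
            ((∏' n : ℕ, W (-Complex.I * y⁻¹ ^ 3) q n) *
              ((∏' n : ℕ, W (-(-Complex.I * y ^ 3 * q)) q n) * (∏' n : ℕ, W (-q) q n))) := by
          unfold Theta1
          rw [hc3e]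
          congr 1
          rw [← (kf'.1.hasProd.mul (kg'.1.hasProd.mul kp.1.hasProd)).tprod_eq]
          apply tprod_congr; intro n
          rw [ed1', hq0 n, ed1, hq1 n]; simp only [W]; ring
        have hcoreM := core q y (-Complex.I) hnq hny hnyq
          (by rw [neg_mul_neg, Complex.I_mul_I]) (by rw [norm_neg, Complex.norm_I]) hA hB
        rw [hcoreM, hEta1, hEta2, hTh2a, hTh2b, hTh1c, hTh1d]
        have hTT : (-Complex.I * Complex.exp ((Real.pi : ℂ) * Complex.I * τ / 12) ^ 3 *
            Complex.exp ((Real.pi : ℂ) * Complex.I * (z - 1 / 4)) *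
            ((∏' n : ℕ, W (-Complex.I * y⁻¹) q n) * ((∏' n : ℕ, W (-(-Complex.I * y * q)) q n) *
              (∏' n : ℕ, W (-q) q n)))) *
            (-Complex.I * Complex.exp ((Real.pi : ℂ) * Complex.I * τ / 12) ^ 3 *
            Complex.exp ((Real.pi : ℂ) * Complex.I * (3 * z - 1 / 4)) *
            ((∏' n : ℕ, W (-Complex.I * y⁻¹ ^ 3) q n) *
              ((∏' n : ℕ, W (-(-Complex.I * y ^ 3 * q)) q n) * (∏' n : ℕ, W (-q) q n))))
            = Complex.exp ((Real.pi : ℂ) * Complex.I * τ / 12) ^ 6 * y ^ 2 * Complex.I *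
              (((∏' n : ℕ, W (-Complex.I * y⁻¹) q n) * ((∏' n : ℕ, W (-(-Complex.I * y * q)) q n) *
                (∏' n : ℕ, W (-q) q n))) *
               ((∏' n : ℕ, W (-Complex.I * y⁻¹ ^ 3) q n) *
                ((∏' n : ℕ, W (-(-Complex.I * y ^ 3 * q)) q n) * (∏' n : ℕ, W (-q) q n)))) := by
          linear_combination (Complex.I * Complex.I *
              Complex.exp ((Real.pi : ℂ) * Complex.I * τ / 12) ^ 6 *
              (((∏' n : ℕ, W (-Complex.I * y⁻¹) q n) * ((∏' n : ℕ, W (-(-Complex.I * y * q)) q n) *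
                (∏' n : ℕ, W (-q) q n))) *
               ((∏' n : ℕ, W (-Complex.I * y⁻¹ ^ 3) q n) *
                ((∏' n : ℕ, W (-(-Complex.I * y ^ 3 * q)) q n) * (∏' n : ℕ, W (-q) q n))))) * hECD
            + (-(Complex.I * Complex.exp ((Real.pi : ℂ) * Complex.I * τ / 12) ^ 6 * y ^ 2 *
              (((∏' n : ℕ, W (-Complex.I * y⁻¹) q n) * ((∏' n : ℕ, W (-(-Complex.I * y * q)) q n) *
                (∏' n : ℕ, W (-q) q n))) *
               ((∏' n : ℕ, W (-Complex.I * y⁻¹ ^ 3) q n) *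
                ((∏' n : ℕ, W (-(-Complex.I * y ^ 3 * q)) q n) * (∏' n : ℕ, W (-q) q n)))))) *
              Complex.I_mul_I
        rw [hTT]
        have hfin : ∀ X U : ℂ, Complex.I * X *
            (Complex.exp ((Real.pi : ℂ) * Complex.I * τ / 12) ^ 6 * y ^ 2 * Complex.I * U)
            = -(Complex.exp ((Real.pi : ℂ) * Complex.I * τ / 12) ^ 6 * y ^ 2 * X * U) := by
          intro X U
          linear_combination (Complex.exp ((Real.pi : ℂ) * Complex.I * τ / 12) ^ 6 * y ^ 2 *
            X * U) * Complex.I_mul_I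
        rw [hfin]
        have hP1 := kp.2.2.1
        have hP2 := kp2.2.2.1
        have hP9 := kc1'.2.2.1
        have hP10 := kc2'.2.2.1
        set C := Complex.exp ((Real.pi : ℂ) * Complex.I * τ / 12) with hCdef
        set P1 := ∏' n : ℕ, W (-q) q n with hP1def
        set P2 := ∏' n : ℕ, W (-(q ^ 2)) (q ^ 2) n with hP2def
        set P3 := ∏' n : ℕ, W (y⁻¹ ^ 2) q n with hP3def
        set P4 := ∏' n : ℕ, W (y ^ 2 * q) q n with hP4def
        set P5 := ∏' n : ℕ, W (-Complex.I * y⁻¹) q n with hP5def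
        set P6 := ∏' n : ℕ, W (-(-Complex.I * y * q)) q n with hP6def
        set P7 := ∏' n : ℕ, W (-Complex.I * y⁻¹ ^ 3) q n with hP7def
        set P8 := ∏' n : ℕ, W (-(-Complex.I * y ^ 3 * q)) q n with hP8def
        set P9 := ∏' n : ℕ, W (y⁻¹ ^ 2) (q ^ 2) n with hP9def
        set P10 := ∏' n : ℕ, W (y ^ 2 * q ^ 2) (q ^ 2) n with hP10def
        clear_value C P1 P2 P3 P4 P5 P6 P7 P8 P9 P10
        have hstep : -y * (P1 ^ 2 * P3 * P4 * P5 * P6 * P7 * P8 * P9⁻¹ ^ 2 * P10⁻¹ ^ 2)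
            = -y * (P1 ^ 2 * P3 * P4 * P5 * P6 * P7 * P8 * P9⁻¹ ^ 2 * P10⁻¹ ^ 2) *
              ((y * y⁻¹) ^ 2 * (P1 * P1⁻¹) * (C * C⁻¹) ^ 13 * (P2 * P2⁻¹) ^ 2) := by
          rw [mul_inv_cancel₀ hy0, mul_inv_cancel₀ hP1, mul_inv_cancel₀ hc0,
            mul_inv_cancel₀ hP2]
          ring
        rw [hstep]
        ring
      · -- some 1 + I y^3 q^(m+1) vanishes
        push_neg at hB
        obtain ⟨m, hm⟩ := hB
        simp only [W] at hm
        have hm' : (1 : ℂ) + Complex.I * y ^ 3 * q ^ (m + 1) = 0 := by linear_combination hm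
        have hL : (∏' n : ℕ,
            ((1 - q ^ (n + 1)) ^ 2 * (1 + y⁻¹ ^ 2 * q ^ n) * (1 + y ^ 2 * q ^ (n + 1)) *
                (1 + -Complex.I * y⁻¹ ^ 3 * q ^ n) * (1 - -Complex.I * y ^ 3 * q ^ (n + 1)) /
              ((1 + -Complex.I * y⁻¹ * q ^ n) * (1 - -Complex.I * y * q ^ (n + 1)) *
                (1 - -Complex.I * y⁻¹ * q ^ n) ^ 2 * (1 + -Complex.I * y * q ^ (n + 1)) ^ 2)))
            = 0 := by
          apply tprod_eq_zero_of_eq_zero m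
          have h2 : (1 : ℂ) - -Complex.I * y ^ 3 * q ^ (m + 1) = 0 := by linear_combination hm'
          rw [h2]; simp
        have hT : Theta1 τ (3 * z - 1 / 4) = 0 := by
          unfold Theta1
          have h0 : (∏' n : ℕ,
              ((1 - Complex.exp (-(2 * (Real.pi : ℂ) * Complex.I * (3 * z - 1 / 4))) *
                  Complex.exp (2 * (Real.pi : ℂ) * Complex.I * (n : ℂ) * τ)) *
               (1 - Complex.exp (2 * (Real.pi : ℂ) * Complex.I * (3 * z - 1 / 4)) *
                  Complex.exp (2 * (Real.pi : ℂ) * Complex.I * ((n : ℂ) + 1) * τ)) *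
               (1 - Complex.exp (2 * (Real.pi : ℂ) * Complex.I * ((n : ℂ) + 1) * τ)))) = 0 := by
            apply tprod_eq_zero_of_eq_zero m
            have h2 : (1 : ℂ) - -Complex.I * y ^ 3 * q ^ (m + 1) = 0 := by linear_combination hm'
            rw [ed1, hq1 m, h2]; simp
          rw [h0, mul_zero]
        rw [hL, hT]; ring
    · -- some 1 + y^2 q^(m+1) vanishes
      push_neg at hA
      obtain ⟨m, hm⟩ := hA
      simp only [W] at hm
      have hm' : (1 : ℂ) + y ^ 2 * q ^ (m + 1) = 0 := by linear_combination hm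
      have hL : (∏' n : ℕ,
          ((1 - q ^ (n + 1)) ^ 2 * (1 + y⁻¹ ^ 2 * q ^ n) * (1 + y ^ 2 * q ^ (n + 1)) *
              (1 + -Complex.I * y⁻¹ ^ 3 * q ^ n) * (1 - -Complex.I * y ^ 3 * q ^ (n + 1)) /
            ((1 + -Complex.I * y⁻¹ * q ^ n) * (1 - -Complex.I * y * q ^ (n + 1)) *
              (1 - -Complex.I * y⁻¹ * q ^ n) ^ 2 * (1 + -Complex.I * y * q ^ (n + 1)) ^ 2)))
          = 0 := by
        apply tprod_eq_zero_of_eq_zero m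
        rw [hm']; simp
      have hT : Theta2 τ (2 * z) = 0 := by
        unfold Theta2
        have h0 : (∏' n : ℕ,
            ((1 + Complex.exp (-(2 * (Real.pi : ℂ) * Complex.I * (2 * z))) *
                Complex.exp (2 * (Real.pi : ℂ) * Complex.I * (n : ℂ) * τ)) *
             (1 + Complex.exp (2 * (Real.pi : ℂ) * Complex.I * (2 * z)) *
                Complex.exp (2 * (Real.pi : ℂ) * Complex.I * ((n : ℂ) + 1) * τ)) *
             (1 - Complex.exp (2 * (Real.pi : ℂ) * Complex.I * ((n : ℂ) + 1) * τ)))) = 0 := by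
          apply tprod_eq_zero_of_eq_zero m
          rw [hy2e, hq1 m, hm']; simp
        rw [h0, mul_zero]
      rw [hL, hT]; ring
  linear_combination hplus + hminus
end

section
/- For all τ, z in the stated domain, the following identity holds: −y ∏_{n≥1} (1−q^n)² (1+y⁻²q^{n−1}) (1+y²q^n) (1+iy⁻³q^{n−1}) (1−iy³q^n) / [ (1−iω²y⁻¹q^{n−1}) (1+iωyq^n) (1+iy⁻¹q^{n−1}) (1−iyq^n) (1−iωy⁻¹q^{n−1}) (1+iω²yq^n) ] − y ∏_{n≥1} (1−q^n)² (1+y⁻²q^{n−1}) (1+y²q^n) (1−iy⁻³q^{n−1}) (1+iy³q^n) / [ (1+iω²y⁻¹q^{n−1}) (1−iωyq^n) (1−iy⁻¹q^{n−1}) (1+iyq^n) (1+iωy⁻¹q^{n−1}) (1−iω²yq^n) ] = i ( η(6τ) θ₂(τ,2z) / ( η(τ)³ θ₂(6τ,6z) ) ) · [ θ₁(τ,z+1/12) θ₁(τ,z+1/4) θ₁(τ,z+5/12) θ₁(τ,3z−1/4) − θ₁(τ,z−1/12) θ₁(τ,z−1/4) θ₁(τ,z−5/12) θ₁(τ,3z+1/4)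 ]. (This is the identity establishing that the graded trace attached to the classes 12A and 12B of the umbral group G⁽⁵⁾ equals the umbral meromorphic Jacobi form ψ⁽⁵⁾_{12AB}.) -/
set_option maxHeartbeats 4000000

open Complex Filter

/-- auxiliary: `1 + x ≠ 0` when `‖x‖ < 1`. -/
lemma one_add_ne_zero' {x : ℂ} (h : ‖x‖ < 1) : 1 + x ≠ 0 := by
  intro h0
  have hx : x = -1 := by linear_combination h0
  rw [hx] at h; simp at h

lemma log_summable_atom {c r : ℂ} (hr : ‖r‖ < 1) {N : ℕ}
    (hN : ∀ n ≥ N, ‖c‖ * ‖r‖ ^ n < 1/2) :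
    Summable fun n : ℕ => Complex.log (if n < N then 1 else 1 + c * r ^ n) := by
  have hgeo : Summable (fun n : ℕ => 3/2 * (‖c‖ * ‖r‖ ^ n)) :=
    (((summable_geometric_of_lt_one (norm_nonneg r) hr).mul_left ‖c‖).mul_left (3/2))
  apply Summable.of_norm_bounded_eventually hgeo
  rw [Nat.cofinite_eq_atTop, eventually_atTop]
  refine ⟨N, fun n hn => ?_⟩
  rw [if_neg (by omega)]
  have h1 : ‖c * r ^ n‖ ≤ 1/2 := by
    rw [norm_mul, norm_pow]; exact (hN n hn).le
  calc ‖Complex.log (1 + c * r ^ n)‖ ≤ 3/2 * ‖c * r ^ n‖ :=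
        Complex.norm_log_one_add_half_le_self h1
    _ ≤ 3/2 * (‖c‖ * ‖r‖ ^ n) := by rw [norm_mul, norm_pow]

lemma multipliable_atom {c r : ℂ} (hr : ‖r‖ < 1) :
    Multipliable (fun n : ℕ => 1 + c * r ^ n) := by
  have h0 : Tendsto (fun n : ℕ => ‖c‖ * ‖r‖ ^ n) atTop (nhds 0) := by
    simpa using (tendsto_pow_atTop_nhds_zero_of_lt_one (norm_nonneg r) hr).const_mul ‖c‖
  obtain ⟨N, hN⟩ := eventually_atTop.mp (h0.eventually_lt_const (by norm_num : (0:ℝ) < 1/2))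
  have hgm : Multipliable (fun n : ℕ => if n < N then 1 + c * r ^ n else 1) := by
    refine (hasProd_prod_of_ne_finset_one (s := Finset.range N) fun b hb => ?_).multipliable
    rw [Finset.mem_range] at hb
    simp [if_neg hb]
  have hhm : Multipliable (fun n : ℕ => if n < N then 1 else 1 + c * r ^ n) := by
    have hz : ∀ (_ : Unit) (n : ℕ), (if n < N then 1 else 1 + c * r ^ n) ≠ 0 := by
      intro _ n
      by_cases hn : n < N
      · simp [hn]
      · rw [if_neg hn]
        apply one_add_ne_zero'
        rw [norm_mul, norm_pow]
        exact lt_trans (hN n (by omega)) (by norm_num)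
    exact Complex.multipliable_of_summable_log (log_summable_atom hr hN)
  exact (hgm.mul hhm).congr fun n => by by_cases hn : n < N <;> simp [hn]

lemma tprod_atom_ne_zero {c r : ℂ} (hr : ‖r‖ < 1) (hc : ‖c‖ < 1) :
    (∏' n : ℕ, (1 + c * r ^ n)) ≠ 0 := by
  have h0 : Tendsto (fun n : ℕ => ‖c‖ * ‖r‖ ^ n) atTop (nhds 0) := by
    simpa using (tendsto_pow_atTop_nhds_zero_of_lt_one (norm_nonneg r) hr).const_mul ‖c‖
  obtain ⟨N, hN⟩ := eventually_atTop.mp (h0.eventually_lt_const (by norm_num : (0:ℝ) < 1/2))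
  have hne : ∀ n : ℕ, 1 + c * r ^ n ≠ 0 := by
    intro n
    apply one_add_ne_zero'
    rw [norm_mul, norm_pow]
    calc ‖c‖ * ‖r‖ ^ n ≤ ‖c‖ * 1 := mul_le_mul_of_nonneg_left
          (pow_le_one₀ (norm_nonneg r) hr.le) (norm_nonneg c)
      _ < 1 := by simpa using hc
  have hgp : HasProd (fun n : ℕ => if n < N then 1 + c * r ^ n else 1)
      (∏ i ∈ Finset.range N, (if i < N then 1 + c * r ^ i else 1)) := by
    refine hasProd_prod_of_ne_finset_one fun b hb => ?_
    rw [Finset.mem_range] at hb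
    simp [if_neg hb]
  have hz : ∀ (_ : Unit) (n : ℕ), (if n < N then 1 else 1 + c * r ^ n) ≠ 0 := by
    intro _ n
    by_cases hn : n < N
    · simp [hn]
    · rw [if_neg hn]; exact hne n
  have hhm := Complex.cexp_tsum_eq_tprod
    (f := fun n => if n < N then 1 else 1 + c * r ^ n) (hz ())
    (log_summable_atom hr hN)
  have h2 := hhm
  have hmul : (∏' n : ℕ, (1 + c * r ^ n)) =
      (∏' n : ℕ, (if n < N then 1 + c * r ^ n else 1)) *
      (∏' n : ℕ, (if n < N then 1 else 1 + c * r ^ n)) := by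
    rw [← Multipliable.tprod_mul hgp.multipliable ⟨_, (Complex.hasProd_of_hasSum_log
      (f := fun n => if n < N then 1 else 1 + c * r ^ n) (hz ())
      (log_summable_atom hr hN).hasSum)⟩]
    exact tprod_congr fun n => by by_cases hn : n < N <;> simp [hn]
  rw [hmul, ← h2]
  apply mul_ne_zero
  · rw [hgp.tprod_eq]
    exact Finset.prod_ne_zero_iff.mpr fun i hi => by
      rw [Finset.mem_range] at hi
      simp only [if_pos hi]
      exact hne i
  · exact Complex.exp_ne_zero _

lemma tprod_div_tprod (f g : ℕ → ℂ) (hf : Multipliable f) (hg : Multipliable g)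
    (h0 : (∏' n, g n) ≠ 0) : ∏' n, (f n / g n) = (∏' n, f n) / (∏' n, g n) := by
  have ht := Filter.Tendsto.div hf.hasProd hg.hasProd h0
  exact HasProd.tprod_eq (ht.congr fun s => (Finset.prod_div_distrib _ _).symm)

lemma six_prod (i w X : ℂ) (hi : i^2 = -1) (h3 : w^3 = 1) (hs : 1 + w + w^2 = 0) :
    (1 - i*w^2*X)*(1 + i*w*X)*(1 + i*X)*(1 - i*X)*(1 - i*w*X)*(1 + i*w^2*X) = 1 + X^6 := by
  have p1 : (1 - i*w^2*X)*(1 + i*w^2*X) = 1 + w*X^2 := by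
    linear_combination (-(w^4*X^2))*hi + (w*X^2)*h3
  have p2 : (1 + i*X)*(1 - i*X) = 1 + X^2 := by linear_combination (-(X^2))*hi
  have p3 : (1 + i*w*X)*(1 - i*w*X) = 1 + w^2*X^2 := by linear_combination (-(w^2*X^2))*hi
  calc (1 - i*w^2*X)*(1 + i*w*X)*(1 + i*X)*(1 - i*X)*(1 - i*w*X)*(1 + i*w^2*X)
      = ((1 - i*w^2*X)*(1 + i*w^2*X)) * ((1 + i*X)*(1 - i*X)) * ((1 + i*w*X)*(1 - i*w*X)) := by
        ring
    _ = (1 + w*X^2) * (1 + X^2) * (1 + w^2*X^2) := by rw [p1, p2, p3]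
    _ = 1 + X^6 := by linear_combination (X^2 + X^4)*hs + (X^4 + X^6)*h3

lemma perterm_abs (A S1 S2 e u1 u2 n3 n4 m1 m2 m3 m4 m5 m6 d1 d2 d3 d4 d5 d6 : ℂ)
    (hA : m1*m3*m5*d1*d3*d5 = S1) (hB : m2*m4*m6*d2*d4*d6 = S2) :
    A * ((u1*u2*e) * ((m1*m2*e) * ((m3*m4*e) * ((m5*m6*e) * ((n3*n4*e) * (d1*d2*d3*d4*d5*d6))))))
      = e^2*u1*u2*n3*n4 * (e*e*e) * (S1*S2*A) := by
  linear_combination (A*u1*u2*n3*n4*e^5*(m2*m4*m6*d2*d4*d6))*hA + (A*u1*u2*n3*n4*e^5*S1)*hB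

lemma final_scalar (Iv ec W X e ea ta tb n1 d1 n2 d2 p1 p2 p3 pu r1 r2 r3 rv y : ℂ)
    (hI2 : Iv^2 = -1) (hec6 : ec^6 = Iv) (hyX : y = X^2)
    (hd1 : d1 ≠ 0) (hd2 : d2 ≠ 0) (he : e ≠ 0) (htb : tb ≠ 0) (hW : W ≠ 0) (hX : X ≠ 0)
    (hec : ec ≠ 0)
    (K1 : ea * (ta * (p1 * (p2 * (p3 * (pu * d1))))) = n1 * (e*e*e) * tb)
    (K2 : ea * (ta * (r1 * (r2 * (r3 * (rv * d2))))) = n2 * (e*e*e) * tb) :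
    -y * (n1/d1) - y * (n2/d2) =
      Iv * (W^6 * ea * (W^3 * X^2 * ta) / ((W * e)^3 * (W^18 * X^6 * tb))) *
      ((-Iv*W^3*(X*ec)*r1) * (-Iv*W^3*(X*ec^3)*r2) * (-Iv*W^3*(X*ec^5)*r3) *
          (-Iv*W^3*(X^3*(ec^3)⁻¹)*rv)
        - (-Iv*W^3*(X*ec⁻¹)*p1) * (-Iv*W^3*(X*(ec^3)⁻¹)*p2) * (-Iv*W^3*(X*(ec^5)⁻¹)*p3) *
          (-Iv*W^3*(X^3*ec^3)*pu)) := by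
  have hM : e*e*e*tb ≠ 0 := mul_ne_zero (mul_ne_zero (mul_ne_zero he he) he) htb
  have t1 : n1/d1 = ea * (ta * (p1 * (p2 * (p3 * pu)))) / (e*e*e*tb) := by
    rw [div_eq_div_iff hd1 hM]
    linear_combination -K1
  have t2 : n2/d2 = ea * (ta * (r1 * (r2 * (r3 * rv)))) / (e*e*e*tb) := by
    rw [div_eq_div_iff hd2 hM]
    linear_combination -K2
  have hRc : ec*ec^3*ec^5*(ec^3)⁻¹ = Iv := by
    rw [← hec6]
    field_simp
  have hPc9 : ec⁻¹ * (ec^3)⁻¹ * (ec^5)⁻¹ * ec^3 * Iv = 1 := by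
    rw [← hec6]
    field_simp
  have hPc : ec⁻¹ * (ec^3)⁻¹ * (ec^5)⁻¹ * ec^3 = -Iv := by
    linear_combination (-Iv)*hPc9 + (ec⁻¹ * (ec^3)⁻¹ * (ec^5)⁻¹ * ec^3)*hI2
  have hR : (-Iv*W^3*(X*ec)*r1) * (-Iv*W^3*(X*ec^3)*r2) * (-Iv*W^3*(X*ec^5)*r3) *
      (-Iv*W^3*(X^3*(ec^3)⁻¹)*rv) = Iv * (W^12 * (X^6 * (r1*(r2*(r3*rv))))) := by
    calc (-Iv*W^3*(X*ec)*r1) * (-Iv*W^3*(X*ec^3)*r2) * (-Iv*W^3*(X*ec^5)*r3) *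
        (-Iv*W^3*(X^3*(ec^3)⁻¹)*rv)
        = (Iv^2)*(Iv^2) * (ec*ec^3*ec^5*(ec^3)⁻¹) * (W^12 * (X^6 * (r1*(r2*(r3*rv))))) := by
          ring
      _ = Iv * (W^12 * (X^6 * (r1*(r2*(r3*rv))))) := by rw [hI2, hRc]; ring
  have hP : (-Iv*W^3*(X*ec⁻¹)*p1) * (-Iv*W^3*(X*(ec^3)⁻¹)*p2) * (-Iv*W^3*(X*(ec^5)⁻¹)*p3) *
      (-Iv*W^3*(X^3*ec^3)*pu) = -Iv * (W^12 * (X^6 * (p1*(p2*(p3*pu))))) := by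
    calc (-Iv*W^3*(X*ec⁻¹)*p1) * (-Iv*W^3*(X*(ec^3)⁻¹)*p2) * (-Iv*W^3*(X*(ec^5)⁻¹)*p3) *
        (-Iv*W^3*(X^3*ec^3)*pu)
        = (Iv^2)*(Iv^2) * (ec⁻¹*(ec^3)⁻¹*(ec^5)⁻¹*ec^3) * (W^12 * (X^6 * (p1*(p2*(p3*pu))))) := by
          ring
      _ = -Iv * (W^12 * (X^6 * (p1*(p2*(p3*pu))))) := by rw [hI2, hPc]; ring
  rw [t1, t2, hR, hP, hyX]
  have step : Iv * (W^6 * ea * (W^3 * X^2 * ta) / ((W * e)^3 * (W^18 * X^6 * tb))) *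
      (Iv * (W^12 * (X^6 * (r1*(r2*(r3*rv))))) - -Iv * (W^12 * (X^6 * (p1*(p2*(p3*pu))))))
      = -((W^6 * ea * (W^3 * X^2 * ta) / ((W * e)^3 * (W^18 * X^6 * tb))) * (W^12 * (X^6 * ((r1*(r2*(r3*rv))) + (p1*(p2*(p3*pu))))))) := by
    linear_combination ((W^6 * ea * (W^3 * X^2 * ta) / ((W * e)^3 * (W^18 * X^6 * tb))) * (W^12 * (X^6 * ((r1*(r2*(r3*rv))) + (p1*(p2*(p3*pu))))))) * hI2
  rw [step]
  field_simp [hW, hX, he, htb]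
  ring

/-- A primitive cube root of unity, `ω = e^{2πi/3}`. -/
noncomputable def omega3 : ℂ := Complex.exp (2 * Real.pi * Complex.I / 3)

/-- Umbral moonshine identity for the classes 12A, 12B of G⁽⁵⁾: the graded trace equals ψ⁽⁵⁾_{12AB}. -/
theorem stmt_19 (τ z : ℂ) (h1 : 0 < -z.im) (h2 : -z.im < τ.im)
    (q y : ℂ)
    (hq : q = Complex.exp (2 * Real.pi * Complex.I * τ))
    (hy : y = Complex.exp (2 * Real.pi * Complex.I * z)) :
    -y * (∏' n : ℕ,
      ((1 - q ^ (n + 1)) ^ 2 * (1 + y⁻¹ ^ 2 * q ^ n) * (1 + y ^ 2 * q ^ (n + 1)) *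
          (1 + Complex.I * y⁻¹ ^ 3 * q ^ n) * (1 - Complex.I * y ^ 3 * q ^ (n + 1)) /
        ((1 - Complex.I * omega3 ^ 2 * y⁻¹ * q ^ n) *
          (1 + Complex.I * omega3 * y * q ^ (n + 1)) *
          (1 + Complex.I * y⁻¹ * q ^ n) * (1 - Complex.I * y * q ^ (n + 1)) *
          (1 - Complex.I * omega3 * y⁻¹ * q ^ n) *
          (1 + Complex.I * omega3 ^ 2 * y * q ^ (n + 1)))))
    - y * (∏' n : ℕ,
      ((1 - q ^ (n + 1)) ^ 2 * (1 + y⁻¹ ^ 2 * q ^ n) * (1 + y ^ 2 * q ^ (n + 1)) *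
          (1 - Complex.I * y⁻¹ ^ 3 * q ^ n) * (1 + Complex.I * y ^ 3 * q ^ (n + 1)) /
        ((1 + Complex.I * omega3 ^ 2 * y⁻¹ * q ^ n) *
          (1 - Complex.I * omega3 * y * q ^ (n + 1)) *
          (1 - Complex.I * y⁻¹ * q ^ n) * (1 + Complex.I * y * q ^ (n + 1)) *
          (1 + Complex.I * omega3 * y⁻¹ * q ^ n) *
          (1 - Complex.I * omega3 ^ 2 * y * q ^ (n + 1)))))
    = Complex.I * (Eta (6 * τ) * Theta2 τ (2 * z) /
        ((Eta τ) ^ 3 * Theta2 (6 * τ) (6 * z))) *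
        (Theta1 τ (z + 1 / 12) * Theta1 τ (z + 1 / 4) * Theta1 τ (z + 5 / 12) *
            Theta1 τ (3 * z - 1 / 4) -
          Theta1 τ (z - 1 / 12) * Theta1 τ (z - 1 / 4) * Theta1 τ (z - 5 / 12) *
            Theta1 τ (3 * z + 1 / 4)) := by
  -- ## basic positivity and norm facts
  have hτ : 0 < τ.im := lt_trans h1 h2
  have hzneg : z.im < 0 := by linarith [h1]
  have hzt : 0 < z.im + τ.im := by linarith [h2]
  have hpi : (0:ℝ) < Real.pi := Real.pi_pos
  have hre1 : (2 * (Real.pi:ℂ) * I * τ).re = -(2 * Real.pi * τ.im) := by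
    simp [Complex.mul_re, Complex.mul_im]
    try ring
  have him_q : ‖q‖ < 1 := by
    rw [hq, Complex.norm_exp, hre1, Real.exp_lt_one_iff]
    nlinarith
  have hyinv : y⁻¹ = Complex.exp (-(2 * (Real.pi:ℂ) * I * z)) := by
    rw [hy, ← Complex.exp_neg]
  have him_yi : ‖y⁻¹‖ < 1 := by
    have hre2 : (-(2 * (Real.pi:ℂ) * I * z)).re = 2 * Real.pi * z.im := by
      simp [Complex.mul_re, Complex.mul_im]
      try ring
    rw [hyinv, Complex.norm_exp, hre2, Real.exp_lt_one_iff]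
    nlinarith
  have him_yq : ‖y * q‖ < 1 := by
    have hyq : y * q = Complex.exp (2 * (Real.pi:ℂ) * I * z + 2 * (Real.pi:ℂ) * I * τ) := by
      rw [Complex.exp_add, hy, hq]
    have hre3 : (2 * (Real.pi:ℂ) * I * z + 2 * (Real.pi:ℂ) * I * τ).re
        = -(2 * Real.pi * (z.im + τ.im)) := by
      simp [Complex.mul_re, Complex.mul_im]
      try ring
    rw [hyq, Complex.norm_exp, hre3, Real.exp_lt_one_iff]
    nlinarith
  have him_q6 : ‖q^6‖ < 1 := by
    rw [norm_pow]
    exact pow_lt_one₀ (norm_nonneg q) him_q (by norm_num)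
  -- ## constants
  have hI2 : I^2 = -1 := Complex.I_sq
  have homega : omega3 = Complex.exp (2 * (Real.pi:ℂ) * I / 3) := rfl
  have hw3 : omega3^3 = 1 := by
    rw [homega, ← Complex.exp_nat_mul,
      show ((3:ℕ):ℂ) * (2 * (Real.pi:ℂ) * I / 3) = 2 * (Real.pi:ℂ) * I by push_cast; ring]
    exact Complex.exp_two_pi_mul_I
  have hwne : omega3 ≠ 1 := by
    intro h
    rw [homega, Complex.exp_eq_one_iff] at h
    obtain ⟨k, hk⟩ := h
    have h2pI : (2*(Real.pi:ℂ)*I) ≠ 0 := by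
      simp [Real.pi_ne_zero, Complex.I_ne_zero]
    have h4 : ((3*k:ℤ):ℂ) * (2*(Real.pi:ℂ)*I) = 1 * (2*(Real.pi:ℂ)*I) := by
      push_cast
      linear_combination (-3) * hk
    have h5 : ((3*k:ℤ):ℂ) = 1 := mul_right_cancel₀ h2pI h4
    have h6 : (3*k : ℤ) = 1 := by exact_mod_cast h5
    omega
  have hws : 1 + omega3 + omega3^2 = 0 := by
    have hfac : (omega3 - 1) * (1 + omega3 + omega3^2) = 0 := by linear_combination hw3
    rcases mul_eq_zero.mp hfac with h | h
    · exact absurd (by linear_combination h) hwne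
    · exact h
  have hwabs : ‖omega3‖ = 1 := by
    rw [homega, Complex.norm_exp]
    have : (2 * (Real.pi:ℂ) * I / 3).re = 0 := by
      simp [Complex.div_re, Complex.mul_re, Complex.mul_im]
    rw [this, Real.exp_zero]
  have hpi2 : Complex.exp ((Real.pi:ℂ) * I / 2) = I := by
    rw [show ((Real.pi:ℂ) * I / 2) = ((Real.pi/2 : ℝ) : ℂ) * I by push_cast; ring,
      Complex.exp_mul_I, ← Complex.ofReal_cos, ← Complex.ofReal_sin,
      Real.cos_pi_div_two, Real.sin_pi_div_two]
    simp
  have hpi2' : Complex.exp (-((Real.pi:ℂ) * I / 2)) = -I := by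
    rw [Complex.exp_neg, hpi2, Complex.inv_I]
  have hc6a : Complex.exp ((Real.pi:ℂ) * I / 6) = -(I * omega3) := by
    rw [show ((Real.pi:ℂ) * I / 6) = 2 * (Real.pi:ℂ) * I / 3 - (Real.pi:ℂ) * I / 2 by ring,
      Complex.exp_sub, hpi2, ← homega, div_eq_mul_inv, Complex.inv_I]
    ring
  have hc6b : Complex.exp (-((Real.pi:ℂ) * I / 6)) = I * omega3^2 := by
    rw [Complex.exp_neg, hc6a]
    refine inv_eq_of_mul_eq_one_right ?_
    linear_combination (-(omega3^3))*hI2 + hw3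
  have hc56a : Complex.exp (5 * (Real.pi:ℂ) * I / 6) = -(I * omega3^2) := by
    rw [show (5 * (Real.pi:ℂ) * I / 6)
        = (2 * (Real.pi:ℂ) * I / 3 + 2 * (Real.pi:ℂ) * I / 3) - (Real.pi:ℂ) * I / 2 by ring,
      Complex.exp_sub, Complex.exp_add, hpi2, ← homega, div_eq_mul_inv, Complex.inv_I]
    ring
  have hc56b : Complex.exp (-(5 * (Real.pi:ℂ) * I / 6)) = I * omega3 := by
    rw [Complex.exp_neg, hc56a]
    refine inv_eq_of_mul_eq_one_right ?_
    linear_combination (-(omega3^3))*hI2 + hw3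
  -- ## the three basic prefactor atoms
  obtain ⟨ec, hec⟩ : ∃ ec, ec = Complex.exp ((Real.pi:ℂ) * I / 12) := ⟨_, rfl⟩
  obtain ⟨W, hW⟩ : ∃ W, W = Complex.exp (Real.pi * Complex.I * τ / 12) := ⟨_, rfl⟩
  obtain ⟨X, hX⟩ : ∃ X, X = Complex.exp ((Real.pi:ℂ) * I * z) := ⟨_, rfl⟩
  have hecne : ec ≠ 0 := by rw [hec]; exact Complex.exp_ne_zero _
  have hWne : W ≠ 0 := by rw [hW]; exact Complex.exp_ne_zero _
  have hXne : X ≠ 0 := by rw [hX]; exact Complex.exp_ne_zero _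
  have hec6 : ec^6 = I := by
    rw [hec, ← Complex.exp_nat_mul,
      show ((6:ℕ):ℂ) * ((Real.pi:ℂ) * I / 12) = (Real.pi:ℂ) * I / 2 by push_cast; ring, hpi2]
  have hW3 : Complex.exp (Real.pi * Complex.I * τ / 4) = W^3 := by
    rw [hW, ← Complex.exp_nat_mul]
    congr 1
    push_cast
    ring
  have hW6 : Complex.exp (Real.pi * Complex.I * (6*τ) / 12) = W^6 := by
    rw [hW, ← Complex.exp_nat_mul]
    congr 1
    push_cast
    ring
  have hW18 : Complex.exp (Real.pi * Complex.I * (6*τ) / 4) = W^18 := by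
    rw [hW, ← Complex.exp_nat_mul]
    congr 1
    push_cast
    ring
  have hyX : y = X^2 := by
    rw [hy, hX, ← Complex.exp_nat_mul]
    congr 1
    push_cast
    ring
  have hXm1 : Complex.exp (Real.pi * Complex.I * (z - 1/12)) = X * ec⁻¹ := by
    rw [show (Real.pi:ℂ) * I * (z - 1/12) = (Real.pi:ℂ)*I*z - (Real.pi:ℂ)*I/12 by ring,
      Complex.exp_sub, ← hX, ← hec, div_eq_mul_inv]
  have hXm2 : Complex.exp (Real.pi * Complex.I * (z - 1/4)) = X * (ec^3)⁻¹ := by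
    rw [show (Real.pi:ℂ) * I * (z - 1/4) = (Real.pi:ℂ)*I*z - ((3:ℕ):ℂ)*((Real.pi:ℂ)*I/12) by
        push_cast; ring,
      Complex.exp_sub, Complex.exp_nat_mul, ← hX, ← hec, div_eq_mul_inv]
  have hXm3 : Complex.exp (Real.pi * Complex.I * (z - 5/12)) = X * (ec^5)⁻¹ := by
    rw [show (Real.pi:ℂ) * I * (z - 5/12) = (Real.pi:ℂ)*I*z - ((5:ℕ):ℂ)*((Real.pi:ℂ)*I/12) by
        push_cast; ring,
      Complex.exp_sub, Complex.exp_nat_mul, ← hX, ← hec, div_eq_mul_inv]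
  have hXu : Complex.exp (Real.pi * Complex.I * (3*z + 1/4)) = X^3 * ec^3 := by
    rw [show (Real.pi:ℂ) * I * (3*z + 1/4)
        = ((3:ℕ):ℂ)*((Real.pi:ℂ)*I*z) + ((3:ℕ):ℂ)*((Real.pi:ℂ)*I/12) by push_cast; ring,
      Complex.exp_add, Complex.exp_nat_mul, Complex.exp_nat_mul, ← hX, ← hec]
  have hXp1 : Complex.exp (Real.pi * Complex.I * (z + 1/12)) = X * ec := by
    rw [show (Real.pi:ℂ) * I * (z + 1/12) = (Real.pi:ℂ)*I*z + (Real.pi:ℂ)*I/12 by ring,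
      Complex.exp_add, ← hX, ← hec]
  have hXp2 : Complex.exp (Real.pi * Complex.I * (z + 1/4)) = X * ec^3 := by
    rw [show (Real.pi:ℂ) * I * (z + 1/4) = (Real.pi:ℂ)*I*z + ((3:ℕ):ℂ)*((Real.pi:ℂ)*I/12) by
        push_cast; ring,
      Complex.exp_add, Complex.exp_nat_mul, ← hX, ← hec]
  have hXp3 : Complex.exp (Real.pi * Complex.I * (z + 5/12)) = X * ec^5 := by
    rw [show (Real.pi:ℂ) * I * (z + 5/12) = (Real.pi:ℂ)*I*z + ((5:ℕ):ℂ)*((Real.pi:ℂ)*I/12) by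
        push_cast; ring,
      Complex.exp_add, Complex.exp_nat_mul, ← hX, ← hec]
  have hXv : Complex.exp (Real.pi * Complex.I * (3*z - 1/4)) = X^3 * (ec^3)⁻¹ := by
    rw [show (Real.pi:ℂ) * I * (3*z - 1/4)
        = ((3:ℕ):ℂ)*((Real.pi:ℂ)*I*z) - ((3:ℕ):ℂ)*((Real.pi:ℂ)*I/12) by push_cast; ring,
      Complex.exp_sub, Complex.exp_nat_mul, Complex.exp_nat_mul, ← hX, ← hec, div_eq_mul_inv]
  have hX2 : Complex.exp (Real.pi * Complex.I * (2*z)) = X^2 := by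
    rw [show (Real.pi:ℂ) * I * (2*z) = ((2:ℕ):ℂ)*((Real.pi:ℂ)*I*z) by push_cast; ring,
      Complex.exp_nat_mul, ← hX]
  have hX6 : Complex.exp (Real.pi * Complex.I * (6*z)) = X^6 := by
    rw [show (Real.pi:ℂ) * I * (6*z) = ((6:ℕ):ℂ)*((Real.pi:ℂ)*I*z) by push_cast; ring,
      Complex.exp_nat_mul, ← hX]
  have ham1 : Complex.exp (-(2 * Real.pi * Complex.I * (z - 1/12))) = -(I*omega3)*y⁻¹ := by
    rw [show (-(2 * Real.pi * Complex.I * (z - 1/12)) : ℂ) = -(2*(Real.pi:ℂ)*I*z) + (Real.pi:ℂ)*I/6 by push_cast; ring, Complex.exp_add, Complex.exp_neg, ← hy, hc6a]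
    ring
  have hbm1 : Complex.exp (2 * Real.pi * Complex.I * (z - 1/12)) = I*omega3^2*y := by
    rw [show (2 * Real.pi * Complex.I * (z - 1/12) : ℂ) = 2*(Real.pi:ℂ)*I*z + -((Real.pi:ℂ)*I/6) by push_cast; ring, Complex.exp_add, ← hy, hc6b]
    ring
  have ham2 : Complex.exp (-(2 * Real.pi * Complex.I * (z - 1/4))) = I*y⁻¹ := by
    rw [show (-(2 * Real.pi * Complex.I * (z - 1/4)) : ℂ) = -(2*(Real.pi:ℂ)*I*z) + (Real.pi:ℂ)*I/2 by push_cast; ring, Complex.exp_add, Complex.exp_neg, ← hy, hpi2]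
    ring
  have hbm2 : Complex.exp (2 * Real.pi * Complex.I * (z - 1/4)) = -(I)*y := by
    rw [show (2 * Real.pi * Complex.I * (z - 1/4) : ℂ) = 2*(Real.pi:ℂ)*I*z + -((Real.pi:ℂ)*I/2) by push_cast; ring, Complex.exp_add, ← hy, hpi2']
    ring
  have ham3 : Complex.exp (-(2 * Real.pi * Complex.I * (z - 5/12))) = -(I*omega3^2)*y⁻¹ := by
    rw [show (-(2 * Real.pi * Complex.I * (z - 5/12)) : ℂ) = -(2*(Real.pi:ℂ)*I*z) + 5*(Real.pi:ℂ)*I/6 by push_cast; ring, Complex.exp_add, Complex.exp_neg, ← hy, hc56a]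
    ring
  have hbm3 : Complex.exp (2 * Real.pi * Complex.I * (z - 5/12)) = I*omega3*y := by
    rw [show (2 * Real.pi * Complex.I * (z - 5/12) : ℂ) = 2*(Real.pi:ℂ)*I*z + -(5*(Real.pi:ℂ)*I/6) by push_cast; ring, Complex.exp_add, ← hy, hc56b]
    ring
  have hap1 : Complex.exp (-(2 * Real.pi * Complex.I * (z + 1/12))) = I*omega3^2*y⁻¹ := by
    rw [show (-(2 * Real.pi * Complex.I * (z + 1/12)) : ℂ) = -(2*(Real.pi:ℂ)*I*z) + -((Real.pi:ℂ)*I/6) by push_cast; ring, Complex.exp_add, Complex.exp_neg, ← hy, hc6b]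
    ring
  have hbp1 : Complex.exp (2 * Real.pi * Complex.I * (z + 1/12)) = -(I*omega3)*y := by
    rw [show (2 * Real.pi * Complex.I * (z + 1/12) : ℂ) = 2*(Real.pi:ℂ)*I*z + (Real.pi:ℂ)*I/6 by push_cast; ring, Complex.exp_add, ← hy, hc6a]
    ring
  have hap2 : Complex.exp (-(2 * Real.pi * Complex.I * (z + 1/4))) = -(I)*y⁻¹ := by
    rw [show (-(2 * Real.pi * Complex.I * (z + 1/4)) : ℂ) = -(2*(Real.pi:ℂ)*I*z) + -((Real.pi:ℂ)*I/2) by push_cast; ring, Complex.exp_add, Complex.exp_neg, ← hy, hpi2']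
    ring
  have hbp2 : Complex.exp (2 * Real.pi * Complex.I * (z + 1/4)) = I*y := by
    rw [show (2 * Real.pi * Complex.I * (z + 1/4) : ℂ) = 2*(Real.pi:ℂ)*I*z + (Real.pi:ℂ)*I/2 by push_cast; ring, Complex.exp_add, ← hy, hpi2]
    ring
  have hap3 : Complex.exp (-(2 * Real.pi * Complex.I * (z + 5/12))) = I*omega3*y⁻¹ := by
    rw [show (-(2 * Real.pi * Complex.I * (z + 5/12)) : ℂ) = -(2*(Real.pi:ℂ)*I*z) + -(5*(Real.pi:ℂ)*I/6) by push_cast; ring, Complex.exp_add, Complex.exp_neg, ← hy, hc56b]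
    ring
  have hbp3 : Complex.exp (2 * Real.pi * Complex.I * (z + 5/12)) = -(I*omega3^2)*y := by
    rw [show (2 * Real.pi * Complex.I * (z + 5/12) : ℂ) = 2*(Real.pi:ℂ)*I*z + 5*(Real.pi:ℂ)*I/6 by push_cast; ring, Complex.exp_add, ← hy, hc56a]
    ring
  have hau : Complex.exp (-(2 * Real.pi * Complex.I * (3*z + 1/4))) = -(I)*y⁻¹^3 := by
    rw [show (-(2 * (Real.pi:ℂ) * I * (3*z + 1/4)))
        = ((3:ℕ):ℂ)*(-(2*(Real.pi:ℂ)*I*z)) + -((Real.pi:ℂ)*I/2) by push_cast; ring,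
      Complex.exp_add, Complex.exp_nat_mul, ← hyinv, hpi2']
    ring
  have hbu : Complex.exp (2 * Real.pi * Complex.I * (3*z + 1/4)) = I*y^3 := by
    rw [show (2 * (Real.pi:ℂ) * I * (3*z + 1/4))
        = ((3:ℕ):ℂ)*(2*(Real.pi:ℂ)*I*z) + (Real.pi:ℂ)*I/2 by push_cast; ring,
      Complex.exp_add, Complex.exp_nat_mul, ← hy, hpi2]
    ring
  have hav : Complex.exp (-(2 * Real.pi * Complex.I * (3*z - 1/4))) = I*y⁻¹^3 := by
    rw [show (-(2 * (Real.pi:ℂ) * I * (3*z - 1/4)))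
        = ((3:ℕ):ℂ)*(-(2*(Real.pi:ℂ)*I*z)) + (Real.pi:ℂ)*I/2 by push_cast; ring,
      Complex.exp_add, Complex.exp_nat_mul, ← hyinv, hpi2]
    ring
  have hbv : Complex.exp (2 * Real.pi * Complex.I * (3*z - 1/4)) = -(I)*y^3 := by
    rw [show (2 * (Real.pi:ℂ) * I * (3*z - 1/4))
        = ((3:ℕ):ℂ)*(2*(Real.pi:ℂ)*I*z) + -((Real.pi:ℂ)*I/2) by push_cast; ring,
      Complex.exp_add, Complex.exp_nat_mul, ← hy, hpi2']
    ring
  have ha2z : Complex.exp (-(2 * Real.pi * Complex.I * (2*z))) = y⁻¹^2 := by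
    rw [show (-(2 * (Real.pi:ℂ) * I * (2*z))) = ((2:ℕ):ℂ)*(-(2*(Real.pi:ℂ)*I*z)) by
        push_cast; ring,
      Complex.exp_nat_mul, ← hyinv]
  have hb2z : Complex.exp (2 * Real.pi * Complex.I * (2*z)) = y^2 := by
    rw [show (2 * (Real.pi:ℂ) * I * (2*z)) = ((2:ℕ):ℂ)*(2*(Real.pi:ℂ)*I*z) by push_cast; ring,
      Complex.exp_nat_mul, ← hy]
  have ha6z : Complex.exp (-(2 * Real.pi * Complex.I * (6*z))) = y⁻¹^6 := by
    rw [show (-(2 * (Real.pi:ℂ) * I * (6*z))) = ((6:ℕ):ℂ)*(-(2*(Real.pi:ℂ)*I*z)) by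
        push_cast; ring,
      Complex.exp_nat_mul, ← hyinv]
  have hb6z : Complex.exp (2 * Real.pi * Complex.I * (6*z)) = y^6 := by
    rw [show (2 * (Real.pi:ℂ) * I * (6*z)) = ((6:ℕ):ℂ)*(2*(Real.pi:ℂ)*I*z) by push_cast; ring,
      Complex.exp_nat_mul, ← hy]
  have hqn : ∀ n : ℕ, Complex.exp (2 * Real.pi * Complex.I * (n:ℂ) * τ) = q^n := by
    intro n
    rw [hq, ← Complex.exp_nat_mul]
    congr 1
    push_cast
    ring
  have hqn1 : ∀ n : ℕ, Complex.exp (2 * Real.pi * Complex.I * ((n:ℂ)+1) * τ) = q^(n+1) := by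
    intro n
    rw [hq, ← Complex.exp_nat_mul]
    congr 1
    push_cast
    ring
  have hq6n : ∀ n : ℕ, Complex.exp (2 * Real.pi * Complex.I * (n:ℂ) * (6*τ)) = (q^6)^n := by
    intro n
    rw [show (2 * (Real.pi:ℂ) * I * (n:ℂ) * (6*τ)) = ((6*n:ℕ):ℂ) * (2*(Real.pi:ℂ)*I*τ) by
        push_cast; ring,
      Complex.exp_nat_mul, ← hq, pow_mul]
  have hq6n1 : ∀ n : ℕ,
      Complex.exp (2 * Real.pi * Complex.I * ((n:ℂ)+1) * (6*τ)) = (q^6)^(n+1) := by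
    intro n
    rw [show (2 * (Real.pi:ℂ) * I * ((n:ℂ)+1) * (6*τ)) = ((6*(n+1):ℕ):ℂ) * (2*(Real.pi:ℂ)*I*τ) by
        push_cast; ring,
      Complex.exp_nat_mul, ← hq, pow_mul]
  -- ## generic canonical form for Theta1 τ
  have hTh1 : ∀ (w a b : ℂ) (P : ℕ → ℂ),
      Complex.exp (-(2 * Real.pi * Complex.I * w)) = a →
      Complex.exp (2 * Real.pi * Complex.I * w) = b →
      (∀ n : ℕ, (1 - a*q^n) * (1 - b*q^(n+1)) * (1 - q^(n+1)) = P n) →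
      Theta1 τ w = -I * Complex.exp (Real.pi * Complex.I * τ / 4) *
        Complex.exp (Real.pi * Complex.I * w) * ∏' n : ℕ, P n := by
    intro w a b P ha hb hP
    simp only [Theta1]
    congr 1
    refine tprod_congr fun n => ?_
    rw [hqn n, hqn1 n, ha, hb]
    exact hP n
  -- ## canonical forms of all theta/eta values
  have hTm1 : Theta1 τ (z - 1/12) = -I * W^3 * (X * ec⁻¹) *
      ∏' n : ℕ, ((1 + I*omega3*y⁻¹*q^n) * (1 - I*omega3^2*y*q^(n+1)) * (1 - q^(n+1))) := by
    rw [hTh1 (z - 1/12) (-(I*omega3) * y⁻¹) (I*omega3^2*y)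
        (fun n => (1 + I*omega3*y⁻¹*q^n) * (1 - I*omega3^2*y*q^(n+1)) * (1 - q^(n+1)))
        ham1 hbm1 (fun n => by ring), hW3, hXm1]
  have hTm2 : Theta1 τ (z - 1/4) = -I * W^3 * (X * (ec^3)⁻¹) *
      ∏' n : ℕ, ((1 - I*y⁻¹*q^n) * (1 + I*y*q^(n+1)) * (1 - q^(n+1))) := by
    rw [hTh1 (z - 1/4) (I * y⁻¹) (-I*y)
        (fun n => (1 - I*y⁻¹*q^n) * (1 + I*y*q^(n+1)) * (1 - q^(n+1)))
        ham2 hbm2 (fun n => by ring), hW3, hXm2]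
  have hTm3 : Theta1 τ (z - 5/12) = -I * W^3 * (X * (ec^5)⁻¹) *
      ∏' n : ℕ, ((1 + I*omega3^2*y⁻¹*q^n) * (1 - I*omega3*y*q^(n+1)) * (1 - q^(n+1))) := by
    rw [hTh1 (z - 5/12) (-(I*omega3^2) * y⁻¹) (I*omega3*y)
        (fun n => (1 + I*omega3^2*y⁻¹*q^n) * (1 - I*omega3*y*q^(n+1)) * (1 - q^(n+1)))
        ham3 hbm3 (fun n => by ring), hW3, hXm3]
  have hTu : Theta1 τ (3*z + 1/4) = -I * W^3 * (X^3 * ec^3) *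
      ∏' n : ℕ, ((1 + I*y⁻¹^3*q^n) * (1 - I*y^3*q^(n+1)) * (1 - q^(n+1))) := by
    rw [hTh1 (3*z + 1/4) (-I * y⁻¹^3) (I*y^3)
        (fun n => (1 + I*y⁻¹^3*q^n) * (1 - I*y^3*q^(n+1)) * (1 - q^(n+1)))
        hau hbu (fun n => by ring), hW3, hXu]
  have hTp1 : Theta1 τ (z + 1/12) = -I * W^3 * (X * ec) *
      ∏' n : ℕ, ((1 - I*omega3^2*y⁻¹*q^n) * (1 + I*omega3*y*q^(n+1)) * (1 - q^(n+1))) := by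
    rw [hTh1 (z + 1/12) (I*omega3^2 * y⁻¹) (-(I*omega3)*y)
        (fun n => (1 - I*omega3^2*y⁻¹*q^n) * (1 + I*omega3*y*q^(n+1)) * (1 - q^(n+1)))
        hap1 hbp1 (fun n => by ring), hW3, hXp1]
  have hTp2 : Theta1 τ (z + 1/4) = -I * W^3 * (X * ec^3) *
      ∏' n : ℕ, ((1 + I*y⁻¹*q^n) * (1 - I*y*q^(n+1)) * (1 - q^(n+1))) := by
    rw [hTh1 (z + 1/4) (-I * y⁻¹) (I*y)
        (fun n => (1 + I*y⁻¹*q^n) * (1 - I*y*q^(n+1)) * (1 - q^(n+1)))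
        hap2 hbp2 (fun n => by ring), hW3, hXp2]
  have hTp3 : Theta1 τ (z + 5/12) = -I * W^3 * (X * ec^5) *
      ∏' n : ℕ, ((1 - I*omega3*y⁻¹*q^n) * (1 + I*omega3^2*y*q^(n+1)) * (1 - q^(n+1))) := by
    rw [hTh1 (z + 5/12) (I*omega3 * y⁻¹) (-(I*omega3^2)*y)
        (fun n => (1 - I*omega3*y⁻¹*q^n) * (1 + I*omega3^2*y*q^(n+1)) * (1 - q^(n+1)))
        hap3 hbp3 (fun n => by ring), hW3, hXp3]
  have hTv : Theta1 τ (3*z - 1/4) = -I * W^3 * (X^3 * (ec^3)⁻¹) *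
      ∏' n : ℕ, ((1 - I*y⁻¹^3*q^n) * (1 + I*y^3*q^(n+1)) * (1 - q^(n+1))) := by
    rw [hTh1 (3*z - 1/4) (I * y⁻¹^3) (-I*y^3)
        (fun n => (1 - I*y⁻¹^3*q^n) * (1 + I*y^3*q^(n+1)) * (1 - q^(n+1)))
        hav hbv (fun n => by ring), hW3, hXv]
  have hT2a : Theta2 τ (2*z) = W^3 * X^2 *
      ∏' n : ℕ, ((1 + y⁻¹^2*q^n) * (1 + y^2*q^(n+1)) * (1 - q^(n+1))) := by
    simp only [Theta2]
    rw [hW3, hX2]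
    congr 1
    refine tprod_congr fun n => ?_
    rw [hqn n, hqn1 n, ha2z, hb2z]
  have hT2b : Theta2 (6*τ) (6*z) = W^18 * X^6 *
      ∏' n : ℕ, ((1 + y⁻¹^6*(q^6)^n) * (1 + y^6*(q^6)^(n+1)) * (1 - (q^6)^(n+1))) := by
    simp only [Theta2]
    rw [hW18, hX6]
    congr 1
    refine tprod_congr fun n => ?_
    rw [hq6n n, hq6n1 n, ha6z, hb6z]
  have hE : Eta τ = W * ∏' n : ℕ, (1 - q^(n+1)) := by
    simp only [Eta]
    rw [← hW]
    congr 1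
    exact tprod_congr fun n => by rw [hqn1 n]
  have hE6 : Eta (6*τ) = W^6 * ∏' n : ℕ, (1 - (q^6)^(n+1)) := by
    simp only [Eta]
    rw [hW6]
    congr 1
    exact tprod_congr fun n => by rw [hq6n1 n]
  -- ## multipliability of all the sequences
  have matQ : ∀ c : ℂ, Multipliable fun n : ℕ => 1 + c*q^n := fun c => multipliable_atom him_q
  have mat6 : ∀ c : ℂ, Multipliable fun n : ℕ => 1 + c*(q^6)^n :=
    fun c => multipliable_atom him_q6
  have m3f : ∀ c1 c2 c3 : ℂ,
      Multipliable (fun n : ℕ => (1 + c1*q^n) * (1 + c2*q^n) * (1 + c3*q^n)) :=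
    fun c1 c2 c3 => ((matQ c1).mul (matQ c2)).mul (matQ c3)
  have m3f6 : ∀ c1 c2 c3 : ℂ,
      Multipliable (fun n : ℕ => (1 + c1*(q^6)^n) * (1 + c2*(q^6)^n) * (1 + c3*(q^6)^n)) :=
    fun c1 c2 c3 => ((mat6 c1).mul (mat6 c2)).mul (mat6 c3)
  have m6f : ∀ c1 c2 c3 c4 c5 c6 : ℂ,
      Multipliable (fun n : ℕ => (1 + c1*q^n) * (1 + c2*q^n) * (1 + c3*q^n) * (1 + c4*q^n) *
        (1 + c5*q^n) * (1 + c6*q^n)) :=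
    fun c1 c2 c3 c4 c5 c6 =>
      (((((matQ c1).mul (matQ c2)).mul (matQ c3)).mul (matQ c4)).mul (matQ c5)).mul (matQ c6)
  have mE : Multipliable (fun n : ℕ => 1 - q^(n+1)) := (matQ (-q)).congr fun n => by ring
  have mEA : Multipliable (fun n : ℕ => 1 - (q^6)^(n+1)) :=
    (mat6 (-(q^6))).congr fun n => by ring
  have mTA : Multipliable (fun n : ℕ =>
      (1 + y⁻¹^2*q^n) * (1 + y^2*q^(n+1)) * (1 - q^(n+1))) :=
    (m3f (y⁻¹^2) (y^2*q) (-q)).congr fun n => by ring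
  have mTB : Multipliable (fun n : ℕ =>
      (1 + y⁻¹^6*(q^6)^n) * (1 + y^6*(q^6)^(n+1)) * (1 - (q^6)^(n+1))) :=
    (m3f6 (y⁻¹^6) (y^6*q^6) (-(q^6))).congr fun n => by ring
  have mPm1 : Multipliable (fun n : ℕ =>
      (1 + I*omega3*y⁻¹*q^n) * (1 - I*omega3^2*y*q^(n+1)) * (1 - q^(n+1))) :=
    (m3f (I*omega3*y⁻¹) (-(I*omega3^2*y*q)) (-q)).congr fun n => by ring
  have mPm2 : Multipliable (fun n : ℕ =>
      (1 - I*y⁻¹*q^n) * (1 + I*y*q^(n+1)) * (1 - q^(n+1))) :=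
    (m3f (-(I*y⁻¹)) (I*y*q) (-q)).congr fun n => by ring
  have mPm3 : Multipliable (fun n : ℕ =>
      (1 + I*omega3^2*y⁻¹*q^n) * (1 - I*omega3*y*q^(n+1)) * (1 - q^(n+1))) :=
    (m3f (I*omega3^2*y⁻¹) (-(I*omega3*y*q)) (-q)).congr fun n => by ring
  have mPu : Multipliable (fun n : ℕ =>
      (1 + I*y⁻¹^3*q^n) * (1 - I*y^3*q^(n+1)) * (1 - q^(n+1))) :=
    (m3f (I*y⁻¹^3) (-(I*y^3*q)) (-q)).congr fun n => by ring
  have mPp1 : Multipliable (fun n : ℕ =>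
      (1 - I*omega3^2*y⁻¹*q^n) * (1 + I*omega3*y*q^(n+1)) * (1 - q^(n+1))) :=
    (m3f (-(I*omega3^2*y⁻¹)) (I*omega3*y*q) (-q)).congr fun n => by ring
  have mPp2 : Multipliable (fun n : ℕ =>
      (1 + I*y⁻¹*q^n) * (1 - I*y*q^(n+1)) * (1 - q^(n+1))) :=
    (m3f (I*y⁻¹) (-(I*y*q)) (-q)).congr fun n => by ring
  have mPp3 : Multipliable (fun n : ℕ =>
      (1 - I*omega3*y⁻¹*q^n) * (1 + I*omega3^2*y*q^(n+1)) * (1 - q^(n+1))) :=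
    (m3f (-(I*omega3*y⁻¹)) (I*omega3^2*y*q) (-q)).congr fun n => by ring
  have mPv : Multipliable (fun n : ℕ =>
      (1 - I*y⁻¹^3*q^n) * (1 + I*y^3*q^(n+1)) * (1 - q^(n+1))) :=
    (m3f (-(I*y⁻¹^3)) (I*y^3*q) (-q)).congr fun n => by ring
  have mN1 : Multipliable (fun n : ℕ =>
      (1 - q^(n+1))^2 * (1 + y⁻¹^2*q^n) * (1 + y^2*q^(n+1)) * (1 + I*y⁻¹^3*q^n) *
        (1 - I*y^3*q^(n+1))) :=
    (m6f (-q) (-q) (y⁻¹^2) (y^2*q) (I*y⁻¹^3) (-(I*y^3*q))).congr fun n => by ring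
  have mN2 : Multipliable (fun n : ℕ =>
      (1 - q^(n+1))^2 * (1 + y⁻¹^2*q^n) * (1 + y^2*q^(n+1)) * (1 - I*y⁻¹^3*q^n) *
        (1 + I*y^3*q^(n+1))) :=
    (m6f (-q) (-q) (y⁻¹^2) (y^2*q) (-(I*y⁻¹^3)) (I*y^3*q)).congr fun n => by ring
  have mD1 : Multipliable (fun n : ℕ =>
      (1 - I*omega3^2*y⁻¹*q^n) * (1 + I*omega3*y*q^(n+1)) * (1 + I*y⁻¹*q^n) *
        (1 - I*y*q^(n+1)) * (1 - I*omega3*y⁻¹*q^n) * (1 + I*omega3^2*y*q^(n+1))) :=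
    (m6f (-(I*omega3^2*y⁻¹)) (I*omega3*y*q) (I*y⁻¹) (-(I*y*q)) (-(I*omega3*y⁻¹))
      (I*omega3^2*y*q)).congr fun n => by ring
  have mD2 : Multipliable (fun n : ℕ =>
      (1 + I*omega3^2*y⁻¹*q^n) * (1 - I*omega3*y*q^(n+1)) * (1 - I*y⁻¹*q^n) *
        (1 + I*y*q^(n+1)) * (1 + I*omega3*y⁻¹*q^n) * (1 - I*omega3^2*y*q^(n+1))) :=
    (m6f (I*omega3^2*y⁻¹) (-(I*omega3*y*q)) (-(I*y⁻¹)) (I*y*q) (I*omega3*y⁻¹)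
      (-(I*omega3^2*y*q))).congr fun n => by ring
  -- ## nonvanishing of the denominator products
  have hnIw1 : ‖(I*omega3*y⁻¹ : ℂ)‖ < 1 := by
    simpa [norm_mul, norm_pow, hwabs] using him_yi
  have hnIw2 : ‖(I*omega3^2*y⁻¹ : ℂ)‖ < 1 := by
    simpa [norm_mul, norm_pow, hwabs] using him_yi
  have hnI : ‖(I*y⁻¹ : ℂ)‖ < 1 := by
    simpa [norm_mul] using him_yi
  have hnJw1 : ‖(I*omega3*y*q : ℂ)‖ < 1 := by
    have : (I*omega3*y*q : ℂ) = I*omega3*(y*q) := by ring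
    rw [this]
    simpa [norm_mul, norm_pow, hwabs] using him_yq
  have hnJw2 : ‖(I*omega3^2*y*q : ℂ)‖ < 1 := by
    have : (I*omega3^2*y*q : ℂ) = I*omega3^2*(y*q) := by ring
    rw [this]
    simpa [norm_mul, norm_pow, hwabs] using him_yq
  have hnJ : ‖(I*y*q : ℂ)‖ < 1 := by
    have : (I*y*q : ℂ) = I*(y*q) := by ring
    rw [this]
    simpa [norm_mul] using him_yq
  have nzQ : ∀ c : ℂ, ‖c‖ < 1 → (∏' n : ℕ, (1 + c*q^n)) ≠ 0 :=
    fun c h => tprod_atom_ne_zero him_q h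
  have nz6 : ∀ c : ℂ, ‖c‖ < 1 → (∏' n : ℕ, (1 + c*(q^6)^n)) ≠ 0 :=
    fun c h => tprod_atom_ne_zero him_q6 h
  have nzE : (∏' n : ℕ, (1 - q^(n+1))) ≠ 0 := by
    rw [show (∏' n : ℕ, (1 - q^(n+1))) = ∏' n : ℕ, (1 + (-q)*q^n) from
      tprod_congr fun n => by ring]
    exact nzQ (-q) (by simpa using him_q)
  have nzTB : (∏' n : ℕ, ((1 + y⁻¹^6*(q^6)^n) * (1 + y^6*(q^6)^(n+1)) * (1 - (q^6)^(n+1)))) ≠ 0 := by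
    rw [show (∏' n : ℕ, ((1 + y⁻¹^6*(q^6)^n) * (1 + y^6*(q^6)^(n+1)) * (1 - (q^6)^(n+1))))
        = ∏' n : ℕ, ((1 + y⁻¹^6*(q^6)^n) * (1 + (y^6*q^6)*(q^6)^n) * (1 + (-(q^6))*(q^6)^n)) from
      tprod_congr fun n => by ring]
    rw [Multipliable.tprod_mul ((mat6 (y⁻¹^6)).mul (mat6 (y^6*q^6))) (mat6 (-(q^6))),
      Multipliable.tprod_mul (mat6 (y⁻¹^6)) (mat6 (y^6*q^6))]
    refine mul_ne_zero (mul_ne_zero (nz6 _ ?_) (nz6 _ ?_)) (nz6 _ ?_)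
    · rw [norm_pow]
      exact pow_lt_one₀ (norm_nonneg _) him_yi (by norm_num)
    · rw [show (y^6*q^6 : ℂ) = (y*q)^6 by ring, norm_pow]
      exact pow_lt_one₀ (norm_nonneg _) him_yq (by norm_num)
    · rw [norm_neg, norm_pow]
      exact pow_lt_one₀ (norm_nonneg _) him_q (by norm_num)
  have nz6f : ∀ c1 c2 c3 c4 c5 c6 : ℂ, ‖c1‖<1 → ‖c2‖<1 → ‖c3‖<1 → ‖c4‖<1 → ‖c5‖<1 → ‖c6‖<1 →
      (∏' n : ℕ, ((1 + c1*q^n) * (1 + c2*q^n) * (1 + c3*q^n) * (1 + c4*q^n) * (1 + c5*q^n) *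
        (1 + c6*q^n))) ≠ 0 := by
    intro c1 c2 c3 c4 c5 c6 n1 n2 n3 n4 n5 n6
    rw [Multipliable.tprod_mul (((((matQ c1).mul (matQ c2)).mul (matQ c3)).mul (matQ c4)).mul (matQ c5))
        (matQ c6),
      Multipliable.tprod_mul ((((matQ c1).mul (matQ c2)).mul (matQ c3)).mul (matQ c4)) (matQ c5),
      Multipliable.tprod_mul (((matQ c1).mul (matQ c2)).mul (matQ c3)) (matQ c4),
      Multipliable.tprod_mul ((matQ c1).mul (matQ c2)) (matQ c3), Multipliable.tprod_mul (matQ c1) (matQ c2)]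
    exact mul_ne_zero (mul_ne_zero (mul_ne_zero (mul_ne_zero (mul_ne_zero
      (nzQ c1 n1) (nzQ c2 n2)) (nzQ c3 n3)) (nzQ c4 n4)) (nzQ c5 n5)) (nzQ c6 n6)
  have nzD1 : (∏' n : ℕ,
      ((1 - I*omega3^2*y⁻¹*q^n) * (1 + I*omega3*y*q^(n+1)) * (1 + I*y⁻¹*q^n) *
        (1 - I*y*q^(n+1)) * (1 - I*omega3*y⁻¹*q^n) * (1 + I*omega3^2*y*q^(n+1)))) ≠ 0 := by
    rw [show (∏' n : ℕ,
        ((1 - I*omega3^2*y⁻¹*q^n) * (1 + I*omega3*y*q^(n+1)) * (1 + I*y⁻¹*q^n) *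
          (1 - I*y*q^(n+1)) * (1 - I*omega3*y⁻¹*q^n) * (1 + I*omega3^2*y*q^(n+1))))
        = ∏' n : ℕ, ((1 + (-(I*omega3^2*y⁻¹))*q^n) * (1 + (I*omega3*y*q)*q^n) *
            (1 + (I*y⁻¹)*q^n) * (1 + (-(I*y*q))*q^n) * (1 + (-(I*omega3*y⁻¹))*q^n) *
            (1 + (I*omega3^2*y*q)*q^n)) from
      tprod_congr fun n => by ring]
    exact nz6f _ _ _ _ _ _ (by simpa using hnIw2) hnJw1 hnI (by simpa using hnJ)
      (by simpa using hnIw1) hnJw2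
  have nzD2 : (∏' n : ℕ,
      ((1 + I*omega3^2*y⁻¹*q^n) * (1 - I*omega3*y*q^(n+1)) * (1 - I*y⁻¹*q^n) *
        (1 + I*y*q^(n+1)) * (1 + I*omega3*y⁻¹*q^n) * (1 - I*omega3^2*y*q^(n+1)))) ≠ 0 := by
    rw [show (∏' n : ℕ,
        ((1 + I*omega3^2*y⁻¹*q^n) * (1 - I*omega3*y*q^(n+1)) * (1 - I*y⁻¹*q^n) *
          (1 + I*y*q^(n+1)) * (1 + I*omega3*y⁻¹*q^n) * (1 - I*omega3^2*y*q^(n+1))))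
        = ∏' n : ℕ, ((1 + (I*omega3^2*y⁻¹)*q^n) * (1 + (-(I*omega3*y*q))*q^n) *
            (1 + (-(I*y⁻¹))*q^n) * (1 + (I*y*q)*q^n) * (1 + (I*omega3*y⁻¹)*q^n) *
            (1 + (-(I*omega3^2*y*q))*q^n)) from
      tprod_congr fun n => by ring]
    exact nz6f _ _ _ _ _ _ hnIw2 (by simpa using hnJw1) (by simpa using hnI) hnJ
      hnIw1 (by simpa using hnJw2)
  -- ## the key product identities
  have key1 : (∏' n : ℕ, ((1 - (q^6)^(n+1)) * (((1 + y⁻¹^2*q^n) * (1 + y^2*q^(n+1)) * (1 - q^(n+1))) * (((1 + I*omega3*y⁻¹*q^n) * (1 - I*omega3^2*y*q^(n+1)) * (1 - q^(n+1))) * (((1 - I*y⁻¹*q^n) * (1 + I*y*q^(n+1)) * (1 - q^(n+1))) * (((1 + I*omega3^2*y⁻¹*q^n) * (1 - I*omega3*y*q^(n+1)) * (1 - q^(n+1))) * (((1 + I*y⁻¹^3*q^n) * (1 - I*y^3*q^(n+1)) * (1 - q^(n+1))) * ((1 - I*omega3^2*y⁻¹*q^n) * (1 + I*omega3*y*q^(n+1))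 * (1 + I*y⁻¹*q^n) * (1 - I*y*q^(n+1)) * (1 - I*omega3*y⁻¹*q^n) * (1 + I*omega3^2*y*q^(n+1)))))))))) = (∏' n : ℕ, (((1 - q^(n+1))^2 * (1 + y⁻¹^2*q^n) * (1 + y^2*q^(n+1)) * (1 + I*y⁻¹^3*q^n) * (1 - I*y^3*q^(n+1))) * ((1 - q^(n+1)) * (1 - q^(n+1)) * (1 - q^(n+1))) * ((1 + y⁻¹^6*(q^6)^n) * (1 + y^6*(q^6)^(n+1)) * (1 - (q^6)^(n+1))))) :=
    tprod_congr fun n => perterm_abs _ _ _ _ _ _ _ _ _ _ _ _ _ _ _ _ _ _ _ _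
      (by linear_combination six_prod I omega3 (y⁻¹*q^n) hI2 hw3 hws)
      (by linear_combination six_prod I omega3 (y*q^(n+1)) hI2 hw3 hws)
  have key2 : (∏' n : ℕ, ((1 - (q^6)^(n+1)) * (((1 + y⁻¹^2*q^n) * (1 + y^2*q^(n+1)) * (1 - q^(n+1))) * (((1 - I*omega3^2*y⁻¹*q^n) * (1 + I*omega3*y*q^(n+1)) * (1 - q^(n+1))) * (((1 + I*y⁻¹*q^n) * (1 - I*y*q^(n+1)) * (1 - q^(n+1))) * (((1 - I*omega3*y⁻¹*q^n) * (1 + I*omega3^2*y*q^(n+1)) * (1 - q^(n+1))) * (((1 - I*y⁻¹^3*q^n) * (1 + I*y^3*q^(n+1)) * (1 - q^(n+1))) * ((1 + I*omega3^2*y⁻¹*q^n) * (1 - I*omega3*y*q^(n+1)) * (1 - I*y⁻¹*q^n) * (1 + I*y*q^(n+1)) * (1 + I*omega3*y⁻¹*q^n) * (1 - I*omega3^2*y*q^(n+1)))))))))) = (∏' n : ℕ, (((1 - q^(n+1))^2 * (1 + y⁻¹^2*q^n) * (1 + y^2*q^(n+1)) * (1 - I*y⁻¹^3*q^n) * (1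 + I*y^3*q^(n+1))) * ((1 - q^(n+1)) * (1 - q^(n+1)) * (1 - q^(n+1))) * ((1 + y⁻¹^6*(q^6)^n) * (1 + y^6*(q^6)^(n+1)) * (1 - (q^6)^(n+1))))) :=
    tprod_congr fun n => perterm_abs _ _ _ _ _ _ _ _ _ _ _ _ _ _ _ _ _ _ _ _
      (by linear_combination six_prod I omega3 (y⁻¹*q^n) hI2 hw3 hws)
      (by linear_combination six_prod I omega3 (y*q^(n+1)) hI2 hw3 hws)
  have L1 : (∏' n : ℕ, ((1 - (q^6)^(n+1)) * (((1 + y⁻¹^2*q^n) * (1 + y^2*q^(n+1)) * (1 - q^(n+1))) * (((1 + I*omega3*y⁻¹*q^n) * (1 - I*omega3^2*y*q^(n+1)) * (1 - q^(n+1))) * (((1 - I*y⁻¹*q^n) * (1 + I*y*q^(n+1)) * (1 - q^(n+1))) * (((1 + I*omega3^2*y⁻¹*q^n) * (1 - I*omega3*y*q^(n+1)) * (1 - q^(n+1))) * (((1 + I*y⁻¹^3*q^n) * (1 - I*y^3*q^(n+1)) * (1 - q^(n+1))) * ((1 - I*omega3^2*y⁻¹*q^n) * (1 + I*omega3*y*q^(n+1))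 * (1 + I*y⁻¹*q^n) * (1 - I*y*q^(n+1)) * (1 - I*omega3*y⁻¹*q^n) * (1 + I*omega3^2*y*q^(n+1)))))))))) = (∏' n : ℕ, (1 - (q^6)^(n+1))) * ((∏' n : ℕ, ((1 + y⁻¹^2*q^n) * (1 + y^2*q^(n+1)) * (1 - q^(n+1)))) * ((∏' n : ℕ, ((1 + I*omega3*y⁻¹*q^n) * (1 - I*omega3^2*y*q^(n+1)) * (1 - q^(n+1)))) * ((∏' n : ℕ, ((1 - I*y⁻¹*q^n) * (1 + I*y*q^(n+1)) * (1 - q^(n+1)))) * ((∏' n : ℕ, ((1 + I*omega3^2*y⁻¹*q^n) * (1 - I*omega3*y*q^(n+1)) * (1 - q^(n+1)))) * ((∏' n : ℕ, ((1 + I*y⁻¹^3*q^n) * (1 - I*y^3*q^(n+1)) * (1 - q^(n+1)))) * (∏' n : ℕ, ((1 - I*omega3^2*y⁻¹*q^n) * (1 + I*omega3*y*q^(n+1)) * (1 + I*y⁻¹*q^n) * (1 - I*y*q^(n+1)) * (1 - I*omega3*y⁻¹*q^n) * (1 + I*omega3^2*y*q^(n+1))))))))) := by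
    rw [Multipliable.tprod_mul mEA (mTA.mul (mPm1.mul (mPm2.mul (mPm3.mul (mPu.mul mD1))))),
      Multipliable.tprod_mul mTA (mPm1.mul (mPm2.mul (mPm3.mul (mPu.mul mD1)))),
      Multipliable.tprod_mul mPm1 (mPm2.mul (mPm3.mul (mPu.mul mD1))),
      Multipliable.tprod_mul mPm2 (mPm3.mul (mPu.mul mD1)),
      Multipliable.tprod_mul mPm3 (mPu.mul mD1),
      Multipliable.tprod_mul mPu mD1]
  have L2 : (∏' n : ℕ, ((1 - (q^6)^(n+1)) * (((1 + y⁻¹^2*q^n) * (1 + y^2*q^(n+1)) * (1 - q^(n+1))) * (((1 - I*omega3^2*y⁻¹*q^n) * (1 + I*omega3*y*q^(n+1)) * (1 - q^(n+1))) * (((1 + I*y⁻¹*q^n) * (1 - I*y*q^(n+1)) * (1 - q^(n+1))) * (((1 - I*omega3*y⁻¹*q^n) * (1 + I*omega3^2*y*q^(n+1)) * (1 - q^(n+1))) * (((1 - I*y⁻¹^3*q^n) * (1 + I*y^3*q^(n+1)) * (1 - q^(n+1))) * ((1 + I*omega3^2*y⁻¹*q^n) * (1 - I*omega3*y*q^(n+1))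 * (1 - I*y⁻¹*q^n) * (1 + I*y*q^(n+1)) * (1 + I*omega3*y⁻¹*q^n) * (1 - I*omega3^2*y*q^(n+1)))))))))) = (∏' n : ℕ, (1 - (q^6)^(n+1))) * ((∏' n : ℕ, ((1 + y⁻¹^2*q^n) * (1 + y^2*q^(n+1)) * (1 - q^(n+1)))) * ((∏' n : ℕ, ((1 - I*omega3^2*y⁻¹*q^n) * (1 + I*omega3*y*q^(n+1)) * (1 - q^(n+1)))) * ((∏' n : ℕ, ((1 + I*y⁻¹*q^n) * (1 - I*y*q^(n+1)) * (1 - q^(n+1)))) * ((∏' n : ℕ, ((1 - I*omega3*y⁻¹*q^n) * (1 + I*omega3^2*y*q^(n+1)) * (1 - q^(n+1)))) * ((∏' n : ℕ, ((1 - I*y⁻¹^3*q^n) * (1 + I*y^3*q^(n+1)) * (1 - q^(n+1)))) * (∏' n : ℕ, ((1 + I*omega3^2*y⁻¹*q^n) * (1 - I*omega3*y*q^(n+1)) * (1 - I*y⁻¹*q^n) * (1 + I*y*q^(n+1)) * (1 + I*omega3*y⁻¹*q^n) * (1 - I*omega3^2*y*q^(n+1))))))))) := by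
    rw [Multipliable.tprod_mul mEA (mTA.mul (mPp1.mul (mPp2.mul (mPp3.mul (mPv.mul mD2))))),
      Multipliable.tprod_mul mTA (mPp1.mul (mPp2.mul (mPp3.mul (mPv.mul mD2)))),
      Multipliable.tprod_mul mPp1 (mPp2.mul (mPp3.mul (mPv.mul mD2))),
      Multipliable.tprod_mul mPp2 (mPp3.mul (mPv.mul mD2)),
      Multipliable.tprod_mul mPp3 (mPv.mul mD2),
      Multipliable.tprod_mul mPv mD2]
  have R1 : (∏' n : ℕ, (((1 - q^(n+1))^2 * (1 + y⁻¹^2*q^n) * (1 + y^2*q^(n+1)) * (1 + I*y⁻¹^3*q^n) * (1 - I*y^3*q^(n+1))) * ((1 - q^(n+1)) * (1 - q^(n+1)) * (1 - q^(n+1))) * ((1 + y⁻¹^6*(q^6)^n) * (1 + y^6*(q^6)^(n+1)) * (1 - (q^6)^(n+1))))) = (∏' n : ℕ, ((1 - q^(n+1))^2 * (1 + y⁻¹^2*q^n) * (1 + y^2*q^(n+1)) * (1 + I*y⁻¹^3*q^n) * (1 - I*y^3*q^(n+1)))) * ((∏' n : ℕ, (1 - q^(n+1))) * (∏' n : ℕ,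 (1 - q^(n+1))) * (∏' n : ℕ, (1 - q^(n+1)))) * (∏' n : ℕ, ((1 + y⁻¹^6*(q^6)^n) * (1 + y^6*(q^6)^(n+1)) * (1 - (q^6)^(n+1)))) := by
    rw [Multipliable.tprod_mul (mN1.mul ((mE.mul mE).mul mE)) mTB,
      Multipliable.tprod_mul mN1 ((mE.mul mE).mul mE),
      Multipliable.tprod_mul (mE.mul mE) mE, Multipliable.tprod_mul mE mE]
  have R2 : (∏' n : ℕ, (((1 - q^(n+1))^2 * (1 + y⁻¹^2*q^n) * (1 + y^2*q^(n+1)) * (1 - I*y⁻¹^3*q^n) * (1 + I*y^3*q^(n+1))) * ((1 - q^(n+1)) * (1 - q^(n+1)) * (1 - q^(n+1))) * ((1 + y⁻¹^6*(q^6)^n) * (1 + y^6*(q^6)^(n+1)) * (1 - (q^6)^(n+1))))) = (∏' n : ℕ, ((1 - q^(n+1))^2 * (1 + y⁻¹^2*q^n) * (1 + y^2*q^(n+1)) * (1 - I*y⁻¹^3*q^n) * (1 + I*y^3*q^(n+1)))) * ((∏' n : ℕ, (1 - q^(n+1))) * (∏' n : ℕ, (1 - q^(n+1))) * (∏' n :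 ℕ, (1 - q^(n+1)))) * (∏' n : ℕ, ((1 + y⁻¹^6*(q^6)^n) * (1 + y^6*(q^6)^(n+1)) * (1 - (q^6)^(n+1)))) := by
    rw [Multipliable.tprod_mul (mN2.mul ((mE.mul mE).mul mE)) mTB,
      Multipliable.tprod_mul mN2 ((mE.mul mE).mul mE),
      Multipliable.tprod_mul (mE.mul mE) mE, Multipliable.tprod_mul mE mE]
  have K1 : (∏' n : ℕ, (1 - (q^6)^(n+1))) * ((∏' n : ℕ, ((1 + y⁻¹^2*q^n) * (1 + y^2*q^(n+1)) * (1 - q^(n+1)))) * ((∏' n : ℕ, ((1 + I*omega3*y⁻¹*q^n) * (1 - I*omega3^2*y*q^(n+1)) * (1 - q^(n+1)))) * ((∏' n : ℕ, ((1 - I*y⁻¹*q^n) * (1 + I*y*q^(n+1)) * (1 - q^(n+1)))) * ((∏' n : ℕ, ((1 + I*omega3^2*y⁻¹*q^n) * (1 - I*omega3*y*q^(n+1)) * (1 - q^(n+1)))) * ((∏' n : ℕ, ((1 + I*y⁻¹^3*q^n) * (1 - I*y^3*q^(n+1)) * (1 - q^(n+1)))) * (∏' n : ℕ, ((1 - I*omega3^2*y⁻¹*q^n)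 * (1 + I*omega3*y*q^(n+1)) * (1 + I*y⁻¹*q^n) * (1 - I*y*q^(n+1)) * (1 - I*omega3*y⁻¹*q^n) * (1 + I*omega3^2*y*q^(n+1))))))))) = (∏' n : ℕ, ((1 - q^(n+1))^2 * (1 + y⁻¹^2*q^n) * (1 + y^2*q^(n+1)) * (1 + I*y⁻¹^3*q^n) * (1 - I*y^3*q^(n+1)))) * ((∏' n : ℕ, (1 - q^(n+1))) * (∏' n : ℕ, (1 - q^(n+1))) * (∏' n : ℕ, (1 - q^(n+1)))) * (∏' n : ℕ, ((1 + y⁻¹^6*(q^6)^n) * (1 + y^6*(q^6)^(n+1)) * (1 - (q^6)^(n+1)))) := L1.symm.trans (key1.trans R1)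
  have K2 : (∏' n : ℕ, (1 - (q^6)^(n+1))) * ((∏' n : ℕ, ((1 + y⁻¹^2*q^n) * (1 + y^2*q^(n+1)) * (1 - q^(n+1)))) * ((∏' n : ℕ, ((1 - I*omega3^2*y⁻¹*q^n) * (1 + I*omega3*y*q^(n+1)) * (1 - q^(n+1)))) * ((∏' n : ℕ, ((1 + I*y⁻¹*q^n) * (1 - I*y*q^(n+1)) * (1 - q^(n+1)))) * ((∏' n : ℕ, ((1 - I*omega3*y⁻¹*q^n) * (1 + I*omega3^2*y*q^(n+1)) * (1 - q^(n+1)))) * ((∏' n : ℕ, ((1 - I*y⁻¹^3*q^n) * (1 + I*y^3*q^(n+1)) * (1 - q^(n+1)))) * (∏' n : ℕ, ((1 + I*omega3^2*y⁻¹*q^n) * (1 - I*omega3*y*q^(n+1)) * (1 - I*y⁻¹*q^n) * (1 + I*y*q^(n+1)) * (1 + I*omega3*y⁻¹*q^n) * (1 - I*omega3^2*y*q^(n+1))))))))) = (∏' n : ℕ, ((1 - q^(n+1))^2 * (1 + y⁻¹^2*q^n) * (1 + y^2*q^(n+1)) * (1 - I*y⁻¹^3*q^n) * (1 + I*y^3*q^(n+1))))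 * ((∏' n : ℕ, (1 - q^(n+1))) * (∏' n : ℕ, (1 - q^(n+1))) * (∏' n : ℕ, (1 - q^(n+1)))) * (∏' n : ℕ, ((1 + y⁻¹^6*(q^6)^n) * (1 + y^6*(q^6)^(n+1)) * (1 - (q^6)^(n+1)))) := L2.symm.trans (key2.trans R2)
  -- ## split the two quotient products
  have split1 : (∏' n : ℕ,
      ((1 - q ^ (n + 1)) ^ 2 * (1 + y⁻¹ ^ 2 * q ^ n) * (1 + y ^ 2 * q ^ (n + 1)) *
          (1 + Complex.I * y⁻¹ ^ 3 * q ^ n) * (1 - Complex.I * y ^ 3 * q ^ (n + 1)) /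
        ((1 - Complex.I * omega3 ^ 2 * y⁻¹ * q ^ n) *
          (1 + Complex.I * omega3 * y * q ^ (n + 1)) *
          (1 + Complex.I * y⁻¹ * q ^ n) * (1 - Complex.I * y * q ^ (n + 1)) *
          (1 - Complex.I * omega3 * y⁻¹ * q ^ n) *
          (1 + Complex.I * omega3 ^ 2 * y * q ^ (n + 1)))))
      = (∏' n : ℕ, ((1 - q^(n+1))^2 * (1 + y⁻¹^2*q^n) * (1 + y^2*q^(n+1)) * (1 + I*y⁻¹^3*q^n) * (1 - I*y^3*q^(n+1)))) / (∏' n : ℕ, ((1 - I*omega3^2*y⁻¹*q^n) * (1 + I*omega3*y*q^(n+1)) * (1 + I*y⁻¹*q^n) * (1 - I*y*q^(n+1)) * (1 - I*omega3*y⁻¹*q^n) * (1 + I*omega3^2*y*q^(n+1)))) :=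
    tprod_div_tprod _ _ mN1 mD1 nzD1
  have split2 : (∏' n : ℕ,
      ((1 - q ^ (n + 1)) ^ 2 * (1 + y⁻¹ ^ 2 * q ^ n) * (1 + y ^ 2 * q ^ (n + 1)) *
          (1 - Complex.I * y⁻¹ ^ 3 * q ^ n) * (1 + Complex.I * y ^ 3 * q ^ (n + 1)) /
        ((1 + Complex.I * omega3 ^ 2 * y⁻¹ * q ^ n) *
          (1 - Complex.I * omega3 * y * q ^ (n + 1)) *
          (1 - Complex.I * y⁻¹ * q ^ n) * (1 + Complex.I * y * q ^ (n + 1)) *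
          (1 + Complex.I * omega3 * y⁻¹ * q ^ n) *
          (1 - Complex.I * omega3 ^ 2 * y * q ^ (n + 1)))))
      = (∏' n : ℕ, ((1 - q^(n+1))^2 * (1 + y⁻¹^2*q^n) * (1 + y^2*q^(n+1)) * (1 - I*y⁻¹^3*q^n) * (1 + I*y^3*q^(n+1)))) / (∏' n : ℕ, ((1 + I*omega3^2*y⁻¹*q^n) * (1 - I*omega3*y*q^(n+1)) * (1 - I*y⁻¹*q^n) * (1 + I*y*q^(n+1)) * (1 + I*omega3*y⁻¹*q^n) * (1 - I*omega3^2*y*q^(n+1)))) :=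
    tprod_div_tprod _ _ mN2 mD2 nzD2
  rw [split1, split2, hE, hE6, hT2a, hT2b, hTp1, hTp2, hTp3, hTv, hTm1, hTm2, hTm3, hTu]
  exact final_scalar _ _ _ _ _ _ _ _ _ _ _ _ _ _ _ _ _ _ _ _ _
    hI2 hec6 hyX nzD1 nzD2 nzE nzTB hWne hXne hecne K1 K2
end
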